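/- arXiv:1401.1774 — 2 statements merged into one kernel-verified Lean document; each statement's English description precedes it below -/
import Mathlib

section
/- For each l ≥ -1, the span of set partitions of left-height at most l is closed under the partition category composition: if p and q each have left-height at most l and are composable, then every partition appearing in their composite has left-height at most l. In particular, the sets P_{≤l}(n,m) span a subcategory of the partition category. -/
open Classical

/-!  A combinatorial axiomatisation of pictures and of the left-height of a
set partition, as sanctioned by the paper.  A picture is presented as a *plan*:
a vertical stack of elementary rows, each row consisting of identity strands
together with a single elementary generator of the partition category
(a crossing, cup, cap, merge, split, unit or counit) placed after `w` strands.
The only crossing points are those of `swap` rows, and a crossing placed after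
`w` strands has left-height `w` (a path to the left edge at that level crosses
exactly the `w` strands to its left).  The left-height of a partition is the
minimum height over all plans realising it. -/

/-- An elementary row with `w` strands to the left of the generator and `v`
strands to its right. -/
inductive Row : ℕ → ℕ → Type
  | swap  (w v : ℕ) : Row (w + 2 + v) (w + 2 + v)
  | cap   (w v : ℕ) : Row (w + 2 + v) (w + v)
  | cup   (w v : ℕ) : Row (w + v) (w + 2 + v)
  | mu    (w v : ℕ) : Row (w + 2 + v) (w + 1 + v)
  | delta (w v : ℕ) : Row (w + 1 + v) (w + 2 + v)
  | eta   (w v : ℕ) : Row (w + v) (w + 1 + v)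
  | eps   (w v : ℕ) : Row (w + 1 + v) (w + v)

/-- The connections realised by an elementary row, as a relation between its
top boundary (`inl`) and bottom boundary (`inr`) points. -/
def rowRel : {a b : ℕ} → Row a b → (Fin a ⊕ Fin b) → (Fin a ⊕ Fin b) → Prop
  | _, _, .swap w _ => fun x y =>
      match x, y with
      | .inl i, .inr j => (i.val = w ∧ j.val = w + 1) ∨ (i.val = w + 1 ∧ j.val = w) ∨
          (i.val ≠ w ∧ i.val ≠ w + 1 ∧ j.val = i.val)
      | _, _ => False
  | _, _, .cap w _ => fun x y =>
      match x, y with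
      | .inl i, .inl j => i.val = w ∧ j.val = w + 1
      | .inl i, .inr j => (i.val < w ∧ j.val = i.val) ∨ (w + 2 ≤ i.val ∧ j.val + 2 = i.val)
      | _, _ => False
  | _, _, .cup w _ => fun x y =>
      match x, y with
      | .inr i, .inr j => i.val = w ∧ j.val = w + 1
      | .inl i, .inr j => (i.val < w ∧ j.val = i.val) ∨ (w ≤ i.val ∧ j.val = i.val + 2)
      | _, _ => False
  | _, _, .mu w _ => fun x y =>
      match x, y with
      | .inl i, .inr j => (i.val < w ∧ j.val = i.val) ∨
          ((i.val = w ∨ i.val = w + 1) ∧ j.val = w) ∨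
          (w + 2 ≤ i.val ∧ j.val + 1 = i.val)
      | _, _ => False
  | _, _, .delta w _ => fun x y =>
      match x, y with
      | .inl i, .inr j => (i.val < w ∧ j.val = i.val) ∨
          (i.val = w ∧ (j.val = w ∨ j.val = w + 1)) ∨
          (w + 1 ≤ i.val ∧ j.val = i.val + 1)
      | _, _ => False
  | _, _, .eta w _ => fun x y =>
      match x, y with
      | .inl i, .inr j => (i.val < w ∧ j.val = i.val) ∨ (w ≤ i.val ∧ j.val = i.val + 1)
      | _, _ => False
  | _, _, .eps w _ => fun x y =>
      match x, y with
      | .inl i, .inr j => (i.val < w ∧ j.val = i.val) ∨ (w + 1 ≤ i.val ∧ j.val + 1 = i.val)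
      | _, _ => False

/-- The left-height contributed by a row: a crossing placed after `w` strands
has left-height `w`; the other generators have no crossing points. -/
def rowHt : {a b : ℕ} → Row a b → ℤ
  | _, _, .swap w _ => (w : ℤ)
  | _, _, _ => -1

/-- The identity connection relation (vertical strands). -/
def idConn (a : ℕ) : (Fin a ⊕ Fin a) → (Fin a ⊕ Fin a) → Prop := fun x y =>
  match x, y with
  | .inl i, .inr j => i.val = j.val
  | _, _ => False

section Stack

variable {a b c : ℕ}

/-- Inclusions into the three-layer set used for stacking. -/
def ιtop : Fin a ⊕ Fin b → Fin a ⊕ (Fin b ⊕ Fin c)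
  | .inl i => .inl i
  | .inr j => .inr (.inl j)

def ιbot : Fin b ⊕ Fin c → Fin a ⊕ (Fin b ⊕ Fin c) := Sum.inr

def ιout : Fin a ⊕ Fin c → Fin a ⊕ (Fin b ⊕ Fin c)
  | .inl i => .inl i
  | .inr j => .inr (.inr j)

/-- Composition (stacking) of two partitions, given as relations on their
boundaries: the transitive closure of the union, restricted to the outer
boundary. -/
def stackRel (P : (Fin a ⊕ Fin b) → (Fin a ⊕ Fin b) → Prop)
    (Q : (Fin b ⊕ Fin c) → (Fin b ⊕ Fin c) → Prop) :
    (Fin a ⊕ Fin c) → (Fin a ⊕ Fin c) → Prop := fun x y =>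
  Relation.EqvGen
    (fun s t => (∃ u v, P u v ∧ s = ιtop u ∧ t = ιtop v) ∨
      (∃ u v, Q u v ∧ s = ιbot (a := a) u ∧ t = ιbot (a := a) v))
    (ιout x) (ιout y)

end Stack

/-- A plan (combinatorial picture): a vertical stack of elementary rows. -/
inductive Plan : ℕ → ℕ → Type
  | nil (a : ℕ) : Plan a a
  | cons {a b c : ℕ} : Row a b → Plan b c → Plan a c

/-- The partition (boundary equivalence relation) realised by a plan. -/
def planRel : {a b : ℕ} → Plan a b → (Fin a ⊕ Fin b) → (Fin a ⊕ Fin b) → Prop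
  | _, _, .nil a => Relation.EqvGen (idConn a)
  | _, _, .cons r rest => stackRel (Relation.EqvGen (rowRel r)) (planRel rest)

/-- The left-height of a plan: the maximal left-height of its crossing points,
or `-1` if it has none. -/
def planHt : {a b : ℕ} → Plan a b → ℤ
  | _, _, .nil _ => -1
  | _, _, .cons r rest => max (rowHt r) (planHt rest)

/-- `Realizes pl P`: the plan `pl` is a picture of the partition given by the
boundary relation `P`. -/
def Realizes {a b : ℕ} (pl : Plan a b) (P : (Fin a ⊕ Fin b) → (Fin a ⊕ Fin b) → Prop) : Prop :=
  ∀ x y, planRel pl x y ↔ P x y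

/-- The left-height of a partition: the minimum of the heights of the pictures
representing it. -/
noncomputable def ht {a b : ℕ} (P : (Fin a ⊕ Fin b) → (Fin a ⊕ Fin b) → Prop) : ℤ :=
  sInf {h : ℤ | ∃ pl : Plan a b, Realizes pl P ∧ planHt pl = h}

/-! ### Auxiliary machinery for the proof -/

section EqvGenTools

theorem eqvGen_map {α β : Type*} {r : α → α → Prop} {r' : β → β → Prop} (f : α → β)
    (h : ∀ s t, r s t → Relation.EqvGen r' (f s) (f t)) :
    ∀ s t, Relation.EqvGen r s t → Relation.EqvGen r' (f s) (f t) := by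
  intro s t hst
  induction hst with
  | rel x y hxy => exact h x y hxy
  | refl x => exact Relation.EqvGen.refl _
  | symm x y _ ih => exact Relation.EqvGen.symm _ _ ih
  | trans x y z _ _ ih1 ih2 => exact Relation.EqvGen.trans _ _ _ ih1 ih2

theorem eqvGen_eq {α β : Type*} {r : α → α → Prop} (f : α → β)
    (h : ∀ s t, r s t → f s = f t) :
    ∀ s t, Relation.EqvGen r s t → f s = f t := by
  intro s t hst
  induction hst with
  | rel x y hxy => exact h x y hxy
  | refl x => rfl
  | symm x y _ ih => exact ih.symm
  | trans x y z _ _ ih1 ih2 => exact ih1.trans ih2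

theorem eqvGen_lift {α β : Type*} {r : α → α → Prop} {Q : β → β → Prop} (hQ : Equivalence Q)
    (f : α → β) (h : ∀ s t, r s t → Q (f s) (f t)) :
    ∀ s t, Relation.EqvGen r s t → Q (f s) (f t) := by
  intro s t hst
  induction hst with
  | rel x y hxy => exact h x y hxy
  | refl x => exact hQ.refl _
  | symm x y _ ih => exact hQ.symm ih
  | trans x y z _ _ ih1 ih2 => exact hQ.trans ih1 ih2

def eqvSetoid {α : Type*} (r : α → α → Prop) : Setoid α :=
  ⟨Relation.EqvGen r, Relation.EqvGen.is_equivalence r⟩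

end EqvGenTools

section Glue

variable {α β W : Type*} (E : Setoid α) (F : Setoid β) (φ : W → α) (ψ : W → β)

def glueGen : (Quotient E ⊕ Quotient F) → (Quotient E ⊕ Quotient F) → Prop :=
  fun s t => ∃ u : W, s = Sum.inl (Quotient.mk E (φ u)) ∧ t = Sum.inr (Quotient.mk F (ψ u))

def glueInv : (Quotient E ⊕ Quotient F) → (Quotient E ⊕ Quotient F) → Prop
  | .inl p, .inl q => p = q
  | .inl p, .inr f => ∃ u, p = Quotient.mk E (φ u) ∧ f = Quotient.mk F (ψ u)
  | .inr f, .inl q => ∃ u, q = Quotient.mk E (φ u) ∧ f = Quotient.mk F (ψ u)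
  | .inr f, .inr g => f = g ∨ ∃ u u', f = Quotient.mk F (ψ u) ∧ g = Quotient.mk F (ψ u') ∧
      Quotient.mk E (φ u) = Quotient.mk E (φ u')

theorem glue_inl
    (key : ∀ u u' : W, Quotient.mk F (ψ u) = Quotient.mk F (ψ u') →
      Quotient.mk E (φ u) = Quotient.mk E (φ u'))
    {p q : Quotient E}
    (h : Relation.EqvGen (glueGen E F φ ψ) (Sum.inl p) (Sum.inl q)) : p = q := by
  suffices H : ∀ x y, Relation.EqvGen (glueGen E F φ ψ) x y → glueInv E F φ ψ x y from H _ _ h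
  intro x y hxy
  induction hxy with
  | rel s t hst => obtain ⟨u, rfl, rfl⟩ := hst; exact ⟨u, rfl, rfl⟩
  | refl s =>
    cases s with
    | inl p => exact rfl
    | inr f => exact Or.inl rfl
  | symm s t _ ih =>
    cases s <;> cases t <;> simp only [glueInv] at ih ⊢
    · exact ih.symm
    · exact ih
    · exact ih
    · rcases ih with h1 | ⟨u, u', h1, h2, h3⟩
      · exact Or.inl h1.symm
      · exact Or.inr ⟨u', u, h2, h1, h3.symm⟩
  | trans s t r _ _ ih1 ih2 =>
    cases s <;> cases t <;> cases r <;> simp only [glueInv] at ih1 ih2 ⊢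
    · exact ih1.trans ih2
    · exact ih1 ▸ ih2
    · obtain ⟨u, hp, hf⟩ := ih1
      obtain ⟨u', hq, hf'⟩ := ih2
      exact hp.trans ((key u u' (hf.symm.trans hf')).trans hq.symm)
    · obtain ⟨u, hp, hf⟩ := ih1
      rcases ih2 with h1 | ⟨u1, u2, hf1, hg, hE⟩
      · exact ⟨u, hp, h1.symm.trans hf⟩
      · exact ⟨u2, hp.trans ((key u u1 (hf.symm.trans hf1)).trans hE), hg⟩
    · obtain ⟨u, hq, hf⟩ := ih1
      exact ⟨u, ih2.symm.trans hq, hf⟩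
    · obtain ⟨u, hq, hf⟩ := ih1
      obtain ⟨u', hq', hg⟩ := ih2
      exact Or.inr ⟨u, u', hf, hg, hq.symm.trans hq'⟩
    · obtain ⟨u, hq, hg⟩ := ih2
      rcases ih1 with h1 | ⟨u1, u2, hf, hg2, hE⟩
      · exact ⟨u, hq, h1.trans hg⟩
      · exact ⟨u1, hq.trans ((key u2 u (hg2.symm.trans hg)).symm.trans hE.symm), hf⟩
    · rcases ih1 with h1 | ⟨u1, u2, hf, hg, hE⟩
      · rcases ih2 with h2 | ⟨u3, u4, hg2, hh, hE2⟩
        · exact Or.inl (h1.trans h2)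
        · exact Or.inr ⟨u3, u4, h1.trans hg2, hh, hE2⟩
      · rcases ih2 with h2 | ⟨u3, u4, hg2, hh, hE2⟩
        · exact Or.inr ⟨u1, u2, hf, h2.symm.trans hg, hE⟩
        · exact Or.inr ⟨u1, u4, hf, hh, hE.trans ((key u2 u3 (hg.symm.trans hg2)).trans hE2)⟩

end Glue

section StackAux

/-- The generating relation used in `stackRel`. -/
def sgen {a b c : ℕ} (P : (Fin a ⊕ Fin b) → (Fin a ⊕ Fin b) → Prop)
    (Q : (Fin b ⊕ Fin c) → (Fin b ⊕ Fin c) → Prop) :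
    (Fin a ⊕ (Fin b ⊕ Fin c)) → (Fin a ⊕ (Fin b ⊕ Fin c)) → Prop := fun s t =>
  (∃ u v, P u v ∧ s = ιtop u ∧ t = ιtop v) ∨
  (∃ u v, Q u v ∧ s = ιbot (a := a) u ∧ t = ιbot (a := a) v)

theorem stackRel_def {a b c : ℕ} {P : (Fin a ⊕ Fin b) → (Fin a ⊕ Fin b) → Prop}
    {Q : (Fin b ⊕ Fin c) → (Fin b ⊕ Fin c) → Prop} {x y : Fin a ⊕ Fin c} :
    stackRel P Q x y ↔ Relation.EqvGen (sgen P Q) (ιout x) (ιout y) := Iff.rfl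

theorem stackRel_equivalence {a b c : ℕ} (P : (Fin a ⊕ Fin b) → (Fin a ⊕ Fin b) → Prop)
    (Q : (Fin b ⊕ Fin c) → (Fin b ⊕ Fin c) → Prop) : Equivalence (stackRel P Q) where
  refl _ := Relation.EqvGen.refl _
  symm h := Relation.EqvGen.symm _ _ h
  trans h1 h2 := Relation.EqvGen.trans _ _ _ h1 h2

theorem planRel_equivalence : ∀ {a b : ℕ} (pl : Plan a b), Equivalence (planRel pl)
  | _, _, .nil _ => Relation.EqvGen.is_equivalence _
  | _, _, .cons _ rest => stackRel_equivalence _ (planRel rest)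

theorem stackRel_congr {a b c : ℕ} {P P' : (Fin a ⊕ Fin b) → (Fin a ⊕ Fin b) → Prop}
    {Q Q' : (Fin b ⊕ Fin c) → (Fin b ⊕ Fin c) → Prop}
    (hP : ∀ u v, P u v ↔ P' u v) (hQ : ∀ u v, Q u v ↔ Q' u v) (x y : Fin a ⊕ Fin c) :
    stackRel P Q x y ↔ stackRel P' Q' x y := by
  constructor <;> intro h <;> refine Relation.EqvGen.mono ?_ _ _ h <;> intro s t hst <;>
    rcases hst with ⟨u, v, h1, h2, h3⟩ | ⟨u, v, h1, h2, h3⟩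
  · exact Or.inl ⟨u, v, (hP u v).mp h1, h2, h3⟩
  · exact Or.inr ⟨u, v, (hQ u v).mp h1, h2, h3⟩
  · exact Or.inl ⟨u, v, (hP u v).mpr h1, h2, h3⟩
  · exact Or.inr ⟨u, v, (hQ u v).mpr h1, h2, h3⟩

def collapse {a c : ℕ} : (Fin a ⊕ (Fin a ⊕ Fin c)) → (Fin a ⊕ Fin c)
  | .inl i => .inl i
  | .inr (.inl i) => .inl i
  | .inr (.inr j) => .inr j

theorem stackRel_id_left {a c : ℕ} (Q : (Fin a ⊕ Fin c) → (Fin a ⊕ Fin c) → Prop)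
    (hQ : Equivalence Q) (x y : Fin a ⊕ Fin c) :
    stackRel (Relation.EqvGen (idConn a)) Q x y ↔ Q x y := by
  constructor
  · intro h
    have hfa : ∀ s t, idConn a s t → (Sum.elim id id s : Fin a) = Sum.elim id id t := by
      rintro (i | i) (j | j) hst
      · exact hst.elim
      · exact Fin.ext hst
      · exact hst.elim
      · exact hst.elim
    have main : ∀ s t, sgen (Relation.EqvGen (idConn a)) Q s t →
        Q (collapse (a := a) (c := c) s) (collapse (a := a) (c := c) t) := by
      rintro s t (⟨u, v, h1, rfl, rfl⟩ | ⟨u, v, h1, rfl, rfl⟩)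
      · have h2 := eqvGen_eq (Sum.elim id id) hfa _ _ h1
        have h3 : ∀ w : Fin a ⊕ Fin a,
            collapse (a := a) (c := c) (ιtop w) = Sum.inl (Sum.elim id id w) := by
          rintro (i | i) <;> rfl
        rw [h3, h3, h2]
        exact hQ.refl _
      · have h3 : ∀ w : Fin a ⊕ Fin c, collapse (a := a) (c := c) (ιbot (a := a) w) = w := by
          rintro (i | j) <;> rfl
        rw [h3, h3]; exact h1
    have h4 := eqvGen_lift hQ _ main _ _ (stackRel_def.mp h)
    have h5 : ∀ z : Fin a ⊕ Fin c, collapse (a := a) (c := c) (ιout z) = z := by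
      rintro (i | j) <;> rfl
    rwa [h5, h5] at h4
  · intro hq
    have step1 : ∀ z : Fin a ⊕ Fin c,
        Relation.EqvGen (sgen (Relation.EqvGen (idConn a)) Q) (ιout z) (ιbot (a := a) z) := by
      rintro (i | j)
      · exact Relation.EqvGen.rel _ _
          (Or.inl ⟨Sum.inl i, Sum.inr i, Relation.EqvGen.rel _ _ rfl, rfl, rfl⟩)
      · exact Relation.EqvGen.refl _
    have mid : Relation.EqvGen (sgen (Relation.EqvGen (idConn a)) Q)
        (ιbot (a := a) x) (ιbot (a := a) y) :=
      Relation.EqvGen.rel _ _ (Or.inr ⟨x, y, hq, rfl, rfl⟩)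
    exact Relation.EqvGen.trans _ _ _ (step1 x)
      (Relation.EqvGen.trans _ _ _ mid (Relation.EqvGen.symm _ _ (step1 y)))

end StackAux
section Assoc

variable {a b c d : ℕ}

def e1 : (Fin a ⊕ Fin b) → (Fin a ⊕ (Fin b ⊕ (Fin c ⊕ Fin d)))
  | .inl i => .inl i
  | .inr j => .inr (.inl j)

def e2 : (Fin b ⊕ Fin c) → (Fin a ⊕ (Fin b ⊕ (Fin c ⊕ Fin d)))
  | .inl i => .inr (.inl i)
  | .inr j => .inr (.inr (.inl j))

def e3 : (Fin c ⊕ Fin d) → (Fin a ⊕ (Fin b ⊕ (Fin c ⊕ Fin d)))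
  | .inl i => .inr (.inr (.inl i))
  | .inr j => .inr (.inr (.inr j))

def e14 : (Fin a ⊕ Fin d) → (Fin a ⊕ (Fin b ⊕ (Fin c ⊕ Fin d)))
  | .inl i => .inl i
  | .inr j => .inr (.inr (.inr j))

variable (A : (Fin a ⊕ Fin b) → (Fin a ⊕ Fin b) → Prop)
  (B : (Fin b ⊕ Fin c) → (Fin b ⊕ Fin c) → Prop)
  (C : (Fin c ⊕ Fin d) → (Fin c ⊕ Fin d) → Prop)

/-- The four-layer gluing relation. -/
def gen4 : (Fin a ⊕ (Fin b ⊕ (Fin c ⊕ Fin d))) → (Fin a ⊕ (Fin b ⊕ (Fin c ⊕ Fin d))) → Prop :=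
  fun s t =>
    (∃ u v, A u v ∧ s = e1 u ∧ t = e1 v) ∨
    (∃ u v, B u v ∧ s = e2 u ∧ t = e2 v) ∨
    (∃ u v, C u v ∧ s = e3 u ∧ t = e3 v)

def fL : (Fin a ⊕ (Fin b ⊕ Fin d)) → (Fin a ⊕ (Fin b ⊕ (Fin c ⊕ Fin d)))
  | .inl i => .inl i
  | .inr (.inl j) => .inr (.inl j)
  | .inr (.inr j) => .inr (.inr (.inr j))

def fR : (Fin a ⊕ (Fin c ⊕ Fin d)) → (Fin a ⊕ (Fin b ⊕ (Fin c ⊕ Fin d)))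
  | .inl i => .inl i
  | .inr (.inl j) => .inr (.inr (.inl j))
  | .inr (.inr j) => .inr (.inr (.inr j))

def gAB : (Fin a ⊕ (Fin b ⊕ Fin c)) → (Fin a ⊕ (Fin b ⊕ (Fin c ⊕ Fin d)))
  | .inl i => .inl i
  | .inr (.inl j) => .inr (.inl j)
  | .inr (.inr j) => .inr (.inr (.inl j))

theorem L1_forward {x y : Fin a ⊕ Fin d} (h : stackRel A (stackRel B C) x y) :
    Relation.EqvGen (gen4 A B C) (e14 x) (e14 y) := by
  have main : ∀ s t, sgen A (stackRel B C) s t →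
      Relation.EqvGen (gen4 A B C) (fL s) (fL t) := by
    rintro s t (⟨u, v, h1, rfl, rfl⟩ | ⟨u, v, h1, rfl, rfl⟩)
    · have h2 : ∀ w : Fin a ⊕ Fin b,
          fL (ιtop (c := d) w) = e1 (c := c) (d := d) w := by rintro (i | j) <;> rfl
      rw [h2, h2]
      exact Relation.EqvGen.rel _ _ (Or.inl ⟨u, v, h1, rfl, rfl⟩)
    · have inner : ∀ s t, sgen B C s t →
          Relation.EqvGen (gen4 A B C) (Sum.inr s) (Sum.inr t) := by
        rintro s t (⟨u', v', h1', rfl, rfl⟩ | ⟨u', v', h1', rfl, rfl⟩)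
        · have h3 : ∀ w : Fin b ⊕ Fin c,
              (Sum.inr (ιtop (c := d) w) : Fin a ⊕ (Fin b ⊕ (Fin c ⊕ Fin d))) = e2 w := by
            rintro (i | j) <;> rfl
          rw [h3, h3]
          exact Relation.EqvGen.rel _ _ (Or.inr (Or.inl ⟨u', v', h1', rfl, rfl⟩))
        · have h3 : ∀ w : Fin c ⊕ Fin d,
              (Sum.inr (ιbot (a := b) w) : Fin a ⊕ (Fin b ⊕ (Fin c ⊕ Fin d))) = e3 w := by
            rintro (i | j) <;> rfl
          rw [h3, h3]
          exact Relation.EqvGen.rel _ _ (Or.inr (Or.inr ⟨u', v', h1', rfl, rfl⟩))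
      have h4 := eqvGen_map Sum.inr inner _ _ (stackRel_def.mp h1)
      have h5 : ∀ w : Fin b ⊕ Fin d,
          fL (ιbot (a := a) w) = (Sum.inr (ιout (b := c) w) : Fin a ⊕ (Fin b ⊕ (Fin c ⊕ Fin d))) := by
        rintro (i | j) <;> rfl
      rw [h5, h5]
      exact h4
  have h6 := eqvGen_map fL main _ _ (stackRel_def.mp h)
  have hx : ∀ z : Fin a ⊕ Fin d, fL (ιout (b := b) z) = e14 (b := b) (c := c) z := by
    rintro (i | j) <;> rfl
  rwa [hx, hx] at h6

theorem L2_forward {x y : Fin a ⊕ Fin d} (h : stackRel (stackRel A B) C x y) :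
    Relation.EqvGen (gen4 A B C) (e14 x) (e14 y) := by
  have main : ∀ s t, sgen (stackRel A B) C s t →
      Relation.EqvGen (gen4 A B C) (fR s) (fR t) := by
    rintro s t (⟨u, v, h1, rfl, rfl⟩ | ⟨u, v, h1, rfl, rfl⟩)
    · have inner : ∀ s t, sgen A B s t →
          Relation.EqvGen (gen4 A B C) (gAB s) (gAB t) := by
        rintro s t (⟨u', v', h1', rfl, rfl⟩ | ⟨u', v', h1', rfl, rfl⟩)
        · have h3 : ∀ w : Fin a ⊕ Fin b,
              gAB (ιtop (c := c) w) = e1 (c := c) (d := d) w := by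
            rintro (i | j) <;> rfl
          rw [h3, h3]
          exact Relation.EqvGen.rel _ _ (Or.inl ⟨u', v', h1', rfl, rfl⟩)
        · have h3 : ∀ w : Fin b ⊕ Fin c,
              gAB (ιbot (a := a) w) = e2 (a := a) (d := d) w := by
            rintro (i | j) <;> rfl
          rw [h3, h3]
          exact Relation.EqvGen.rel _ _ (Or.inr (Or.inl ⟨u', v', h1', rfl, rfl⟩))
      have h4 := eqvGen_map gAB inner _ _ (stackRel_def.mp h1)
      have h5 : ∀ w : Fin a ⊕ Fin c,
          fR (ιtop (c := d) w) = gAB (a := a) (d := d) (ιout (b := b) w) := by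
        rintro (i | j) <;> rfl
      rw [h5, h5]
      exact h4
    · have h3 : ∀ w : Fin c ⊕ Fin d,
          fR (ιbot (a := a) w) = e3 (a := a) (b := b) w := by
        rintro (i | j) <;> rfl
      rw [h3, h3]
      exact Relation.EqvGen.rel _ _ (Or.inr (Or.inr ⟨u, v, h1, rfl, rfl⟩))
  have h6 := eqvGen_map fR main _ _ (stackRel_def.mp h)
  have hx : ∀ z : Fin a ⊕ Fin d, fR (ιout (b := c) z) = e14 (b := b) (c := c) z := by
    rintro (i | j) <;> rfl
  rwa [hx, hx] at h6

/-- Setoids for the quotient (gluing) argument, left-nested version. -/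
def EL : Setoid (Fin a ⊕ (Fin b ⊕ Fin d)) := eqvSetoid (sgen A (stackRel B C))

def FL : Setoid (Fin b ⊕ (Fin c ⊕ Fin d)) := eqvSetoid (sgen B C)

def GluL : Setoid (Quotient (EL A B C) ⊕ Quotient (FL B C)) :=
  eqvSetoid (glueGen (EL A B C) (FL B C) (ιbot (a := a)) (ιout (b := c)))

def ML : (Fin a ⊕ (Fin b ⊕ (Fin c ⊕ Fin d))) → Quotient (GluL A B C)
  | .inl i => Quotient.mk _ (.inl (Quotient.mk _ (.inl i)))
  | .inr (.inl i) => Quotient.mk _ (.inl (Quotient.mk _ (.inr (.inl i))))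
  | .inr (.inr (.inl i)) => Quotient.mk _ (.inr (Quotient.mk _ (.inr (.inl i))))
  | .inr (.inr (.inr i)) => Quotient.mk _ (.inl (Quotient.mk _ (.inr (.inr i))))

theorem keyL : ∀ u u' : Fin b ⊕ Fin d,
    Quotient.mk (FL B C) (ιout (b := c) u) = Quotient.mk (FL B C) (ιout (b := c) u') →
    Quotient.mk (EL A B C) (ιbot (a := a) u) = Quotient.mk (EL A B C) (ιbot (a := a) u') := by
  intro u u' h
  have h2 : Relation.EqvGen (sgen B C) (ιout u) (ιout u') := Quotient.exact h
  exact Quot.sound (Relation.EqvGen.rel _ _ (Or.inr ⟨u, u', h2, rfl, rfl⟩))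

theorem ML_step : ∀ s t, gen4 A B C s t → ML A B C s = ML A B C t := by
  rintro s t (⟨u, v, h1, rfl, rfl⟩ | ⟨u, v, h1, rfl, rfl⟩ | ⟨u, v, h1, rfl, rfl⟩)
  · have key : ∀ w : Fin a ⊕ Fin b, ML A B C (e1 w) =
        Quotient.mk (GluL A B C) (.inl (Quotient.mk (EL A B C) (ιtop (c := d) w))) := by
      rintro (i | j) <;> rfl
    have h2 : Quotient.mk (EL A B C) (ιtop (c := d) u) =
        Quotient.mk (EL A B C) (ιtop (c := d) v) :=
      Quot.sound (Relation.EqvGen.rel _ _ (Or.inl ⟨u, v, h1, rfl, rfl⟩))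
    rw [key, key, h2]
  · have key : ∀ w : Fin b ⊕ Fin c, ML A B C (e2 w) =
        Quotient.mk (GluL A B C) (.inr (Quotient.mk (FL B C) (ιtop (c := d) w))) := by
      rintro (i | j)
      · exact Quot.sound (Relation.EqvGen.rel _ _ ⟨Sum.inl i, rfl, rfl⟩)
      · rfl
    have h2 : Quotient.mk (FL B C) (ιtop (c := d) u) =
        Quotient.mk (FL B C) (ιtop (c := d) v) :=
      Quot.sound (Relation.EqvGen.rel _ _ (Or.inl ⟨u, v, h1, rfl, rfl⟩))
    rw [key, key, h2]
  · have key : ∀ w : Fin c ⊕ Fin d, ML A B C (e3 w) =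
        Quotient.mk (GluL A B C) (.inr (Quotient.mk (FL B C) (ιbot (a := b) w))) := by
      rintro (i | j)
      · rfl
      · exact Quot.sound (Relation.EqvGen.rel _ _ ⟨Sum.inr j, rfl, rfl⟩)
    have h2 : Quotient.mk (FL B C) (ιbot (a := b) u) =
        Quotient.mk (FL B C) (ιbot (a := b) v) :=
      Quot.sound (Relation.EqvGen.rel _ _ (Or.inr ⟨u, v, h1, rfl, rfl⟩))
    rw [key, key, h2]

theorem L1_backward {x y : Fin a ⊕ Fin d}
    (h : Relation.EqvGen (gen4 A B C) (e14 x) (e14 y)) :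
    stackRel A (stackRel B C) x y := by
  have hM := eqvGen_eq (ML A B C) (ML_step A B C) _ _ h
  have hx : ∀ z : Fin a ⊕ Fin d, ML A B C (e14 z) =
      Quotient.mk (GluL A B C) (.inl (Quotient.mk (EL A B C) (ιout (b := b) z))) := by
    rintro (i | j) <;> rfl
  rw [hx, hx] at hM
  have h2 : Relation.EqvGen (glueGen (EL A B C) (FL B C) (ιbot (a := a)) (ιout (b := c)))
      (Sum.inl (Quotient.mk (EL A B C) (ιout x)))
      (Sum.inl (Quotient.mk (EL A B C) (ιout y))) := Quotient.exact hM
  have h3 := glue_inl _ _ _ _ (keyL A B C) h2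
  exact stackRel_def.mpr (Quotient.exact h3)

/-- Setoids for the quotient (gluing) argument, right-nested version. -/
def ER : Setoid (Fin a ⊕ (Fin c ⊕ Fin d)) := eqvSetoid (sgen (stackRel A B) C)

def FR : Setoid (Fin a ⊕ (Fin b ⊕ Fin c)) := eqvSetoid (sgen A B)

def GluR : Setoid (Quotient (ER A B C) ⊕ Quotient (FR A B)) :=
  eqvSetoid (glueGen (ER A B C) (FR A B) (ιtop (c := d)) (ιout (b := b)))

def MR : (Fin a ⊕ (Fin b ⊕ (Fin c ⊕ Fin d))) → Quotient (GluR A B C)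
  | .inl i => Quotient.mk _ (.inl (Quotient.mk _ (.inl i)))
  | .inr (.inl i) => Quotient.mk _ (.inr (Quotient.mk _ (.inr (.inl i))))
  | .inr (.inr (.inl i)) => Quotient.mk _ (.inl (Quotient.mk _ (.inr (.inl i))))
  | .inr (.inr (.inr i)) => Quotient.mk _ (.inl (Quotient.mk _ (.inr (.inr i))))

theorem keyR : ∀ u u' : Fin a ⊕ Fin c,
    Quotient.mk (FR A B) (ιout (b := b) u) = Quotient.mk (FR A B) (ιout (b := b) u') →
    Quotient.mk (ER A B C) (ιtop (c := d) u) = Quotient.mk (ER A B C) (ιtop (c := d) u') := by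
  intro u u' h
  have h2 : Relation.EqvGen (sgen A B) (ιout u) (ιout u') := Quotient.exact h
  exact Quot.sound (Relation.EqvGen.rel _ _ (Or.inl ⟨u, u', h2, rfl, rfl⟩))

theorem MR_step : ∀ s t, gen4 A B C s t → MR A B C s = MR A B C t := by
  rintro s t (⟨u, v, h1, rfl, rfl⟩ | ⟨u, v, h1, rfl, rfl⟩ | ⟨u, v, h1, rfl, rfl⟩)
  · have key : ∀ w : Fin a ⊕ Fin b, MR A B C (e1 w) =
        Quotient.mk (GluR A B C) (.inr (Quotient.mk (FR A B) (ιtop (c := c) w))) := by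
      rintro (i | j)
      · exact Quot.sound (Relation.EqvGen.rel _ _ ⟨Sum.inl i, rfl, rfl⟩)
      · rfl
    have h2 : Quotient.mk (FR A B) (ιtop (c := c) u) =
        Quotient.mk (FR A B) (ιtop (c := c) v) :=
      Quot.sound (Relation.EqvGen.rel _ _ (Or.inl ⟨u, v, h1, rfl, rfl⟩))
    rw [key, key, h2]
  · have key : ∀ w : Fin b ⊕ Fin c, MR A B C (e2 w) =
        Quotient.mk (GluR A B C) (.inr (Quotient.mk (FR A B) (ιbot (a := a) w))) := by
      rintro (i | j)
      · rfl
      · exact Quot.sound (Relation.EqvGen.rel _ _ ⟨Sum.inr j, rfl, rfl⟩)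
    have h2 : Quotient.mk (FR A B) (ιbot (a := a) u) =
        Quotient.mk (FR A B) (ιbot (a := a) v) :=
      Quot.sound (Relation.EqvGen.rel _ _ (Or.inr ⟨u, v, h1, rfl, rfl⟩))
    rw [key, key, h2]
  · have key : ∀ w : Fin c ⊕ Fin d, MR A B C (e3 w) =
        Quotient.mk (GluR A B C) (.inl (Quotient.mk (ER A B C) (ιbot (a := a) w))) := by
      rintro (i | j) <;> rfl
    have h2 : Quotient.mk (ER A B C) (ιbot (a := a) u) =
        Quotient.mk (ER A B C) (ιbot (a := a) v) :=
      Quot.sound (Relation.EqvGen.rel _ _ (Or.inr ⟨u, v, h1, rfl, rfl⟩))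
    rw [key, key, h2]

theorem L2_backward {x y : Fin a ⊕ Fin d}
    (h : Relation.EqvGen (gen4 A B C) (e14 x) (e14 y)) :
    stackRel (stackRel A B) C x y := by
  have hM := eqvGen_eq (MR A B C) (MR_step A B C) _ _ h
  have hx : ∀ z : Fin a ⊕ Fin d, MR A B C (e14 z) =
      Quotient.mk (GluR A B C) (.inl (Quotient.mk (ER A B C) (ιout (b := c) z))) := by
    rintro (i | j) <;> rfl
  rw [hx, hx] at hM
  have h2 : Relation.EqvGen (glueGen (ER A B C) (FR A B) (ιtop (c := d)) (ιout (b := b)))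
      (Sum.inl (Quotient.mk (ER A B C) (ιout x)))
      (Sum.inl (Quotient.mk (ER A B C) (ιout y))) := Quotient.exact hM
  have h3 := glue_inl _ _ _ _ (keyR A B C) h2
  exact stackRel_def.mpr (Quotient.exact h3)

theorem stackRel_assoc (x y : Fin a ⊕ Fin d) :
    stackRel A (stackRel B C) x y ↔ stackRel (stackRel A B) C x y :=
  ⟨fun h => L2_backward A B C (L1_forward A B C h),
   fun h => L1_backward A B C (L2_forward A B C h)⟩

end Assoc
/-- Vertical concatenation (stacking) of plans. -/
def Plan.append : {a b c : ℕ} → Plan a b → Plan b c → Plan a c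
  | _, _, _, .nil _, q => q
  | _, _, _, .cons r rest, q => .cons r (rest.append q)

/-- Stacking plans realises the stacking of the corresponding partitions. -/
theorem planRel_append : ∀ {a b c : ℕ} (pl : Plan a b) (ql : Plan b c) (x y : Fin a ⊕ Fin c),
    planRel (pl.append ql) x y ↔ stackRel (planRel pl) (planRel ql) x y
  | _, _, _, .nil _, ql, x, y =>
    (stackRel_id_left (planRel ql) (planRel_equivalence ql) x y).symm
  | _, _, _, .cons r rest, ql, x, y => by
    have ih := planRel_append rest ql
    calc planRel ((Plan.cons r rest).append ql) x y
        ↔ stackRel (Relation.EqvGen (rowRel r)) (planRel (rest.append ql)) x y := Iff.rfl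
      _ ↔ stackRel (Relation.EqvGen (rowRel r)) (stackRel (planRel rest) (planRel ql)) x y :=
          stackRel_congr (fun _ _ => Iff.rfl) ih x y
      _ ↔ stackRel (stackRel (Relation.EqvGen (rowRel r)) (planRel rest)) (planRel ql) x y :=
          stackRel_assoc _ _ _ x y

theorem neg_one_le_planHt : ∀ {a b : ℕ} (pl : Plan a b), (-1 : ℤ) ≤ planHt pl
  | _, _, .nil _ => le_refl _
  | _, _, .cons _ rest => le_trans (neg_one_le_planHt rest) (le_max_right _ _)

theorem planHt_append : ∀ {a b c : ℕ} (pl : Plan a b) (ql : Plan b c),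
    planHt (pl.append ql) ≤ max (planHt pl) (planHt ql)
  | _, _, _, .nil _, ql => le_max_right _ _
  | _, _, _, .cons r rest, ql => by
    have ih := planHt_append rest ql
    simp only [Plan.append, planHt]
    rw [max_assoc]
    exact max_le_max (le_refl _) ih
/-- For each `l ≥ -1`, the partitions of left-height at most `l`
are closed under the partition category composition: if `p` and `q` are
(composable) partitions of left-height at most `l`, then the partition
underlying their composite has left-height at most `l`.  Hence the sets
`P_{≤l}(n,m)` span a subcategory of the partition category. -/
theorem height_closed_under_composition {n m k : ℕ} (l : ℤ) (hl : -1 ≤ l)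
    (P : (Fin n ⊕ Fin m) → (Fin n ⊕ Fin m) → Prop)
    (Q : (Fin m ⊕ Fin k) → (Fin m ⊕ Fin k) → Prop)
    (hPpic : ∃ pl : Plan n m, Realizes pl P)
    (hQpic : ∃ pl : Plan m k, Realizes pl Q)
    (hP : ht P ≤ l) (hQ : ht Q ≤ l) :
    ht (stackRel P Q) ≤ l := by
  obtain ⟨pl₀, hpl₀⟩ := hPpic
  obtain ⟨ql₀, hql₀⟩ := hQpic
  have hbP : BddBelow {h : ℤ | ∃ pl : Plan n m, Realizes pl P ∧ planHt pl = h} := by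
    refine ⟨-1, ?_⟩
    rintro h ⟨pl, -, rfl⟩
    exact neg_one_le_planHt pl
  have hneP : Set.Nonempty {h : ℤ | ∃ pl : Plan n m, Realizes pl P ∧ planHt pl = h} :=
    ⟨planHt pl₀, pl₀, hpl₀, rfl⟩
  obtain ⟨pl, hplR, hplH⟩ := Int.csInf_mem hneP hbP
  have hbQ : BddBelow {h : ℤ | ∃ pl : Plan m k, Realizes pl Q ∧ planHt pl = h} := by
    refine ⟨-1, ?_⟩
    rintro h ⟨ql, -, rfl⟩
    exact neg_one_le_planHt ql
  have hneQ : Set.Nonempty {h : ℤ | ∃ pl : Plan m k, Realizes pl Q ∧ planHt pl = h} :=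
    ⟨planHt ql₀, ql₀, hql₀, rfl⟩
  obtain ⟨ql, hqlR, hqlH⟩ := Int.csInf_mem hneQ hbQ
  have hreal : Realizes (pl.append ql) (stackRel P Q) := fun x y =>
    (planRel_append pl ql x y).trans (stackRel_congr hplR hqlR x y)
  have hbS : BddBelow {h : ℤ | ∃ pl' : Plan n k, Realizes pl' (stackRel P Q) ∧ planHt pl' = h} := by
    refine ⟨-1, ?_⟩
    rintro h ⟨pl', -, rfl⟩
    exact neg_one_le_planHt pl'
  have hht : ht (stackRel P Q) ≤ planHt (pl.append ql) :=
    csInf_le hbS ⟨pl.append ql, hreal, rfl⟩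
  have hPl : planHt pl ≤ l := hplH.le.trans hP
  have hQl : planHt ql ≤ l := hqlH.le.trans hQ
  calc ht (stackRel P Q) ≤ planHt (pl.append ql) := hht
    _ ≤ max (planHt pl) (planHt ql) := planHt_append pl ql
    _ ≤ l := max_le hPl hQl
end

section
/- For every pair partition p ∈ J(n,n), the left-height satisfies ht(p) ≤ n - 2. Consequently J_{≤r}(n,n) = J_{≤n-2}(n,n) for all r with n - 2 ≤ r. -/
open Classical

namespace PairProof

/-- symmetric pair relation of an involution -/
def pairRel {α : Type*} (f : α → α) : α → α → Prop := fun x y => x = y ∨ y = f x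

theorem pairRel_equivalence {α : Type*} {f : α → α} (hf : Function.Involutive f) :
    Equivalence (pairRel f) := by
  constructor
  · exact fun x => Or.inl rfl
  · rintro x y (rfl | rfl)
    · exact Or.inl rfl
    · exact Or.inr (hf x).symm
  · rintro x y z (rfl | rfl) (rfl | rfl) <;> first
      | exact Or.inl rfl
      | exact Or.inr rfl
      | exact Or.inr (hf x).symm
      | exact Or.inl (hf x).symm

theorem eqvGen_pairRel {α : Type*} {f : α → α} (hf : Function.Involutive f) (x y : α) :
    Relation.EqvGen (fun x y => y = f x) x y ↔ pairRel f x y := by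
  constructor
  · intro h
    induction h with
    | rel u v h => exact Or.inr h
    | refl u => exact Or.inl rfl
    | symm u v _ ih => exact (pairRel_equivalence hf).symm ih
    | trans u v w _ _ ih1 ih2 => exact (pairRel_equivalence hf).trans ih1 ih2
  · rintro (rfl | rfl)
    · exact Relation.EqvGen.refl x
    · exact Relation.EqvGen.rel x (f x) rfl

theorem eqvGen_constant {α β : Type*} (ψ : α → β) (R : α → α → Prop)
    (h : ∀ u v, R u v → ψ u = ψ v) {u v : α} (hr : Relation.EqvGen R u v) : ψ u = ψ v := by
  induction hr with
  | rel u v hr => exact h u v hr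
  | refl u => rfl
  | symm u v _ ih => exact ih.symm
  | trans u v w _ _ ih1 ih2 => exact ih1.trans ih2

/-- encoding of boundary points -/
def enc {a c : ℕ} : Fin a ⊕ Fin c → ℕ := Sum.elim (fun i => i.val) (fun k => a + k.val)

theorem enc_inj {a c : ℕ} {x y : Fin a ⊕ Fin c} (h : enc x = enc y) : x = y := by
  rcases x with i | i <;> rcases y with j | j <;>
    simp only [enc, Sum.elim_inl, Sum.elim_inr] at h <;>
    first
      | (congr 1; exact Fin.ext (by omega))
      | (exact absurd h (by have := i.isLt; have := j.isLt; omega))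

/-- canonical representative of a pair -/
def canon {a c : ℕ} (f : Fin a ⊕ Fin c → Fin a ⊕ Fin c) (x : Fin a ⊕ Fin c) : Fin a ⊕ Fin c :=
  if enc x ≤ enc (f x) then x else f x

theorem canon_f {a c : ℕ} {f : Fin a ⊕ Fin c → Fin a ⊕ Fin c}
    (hf : Function.Involutive f) (z : Fin a ⊕ Fin c) : canon f (f z) = canon f z := by
  unfold canon
  rw [hf z]
  rcases lt_trichotomy (enc z) (enc (f z)) with h | h | h
  · rw [if_neg (by omega), if_pos (by omega)]
  · rw [← enc_inj h]
  · rw [if_pos (by omega), if_neg (by omega)]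

theorem canon_eq {a c : ℕ} {f : Fin a ⊕ Fin c → Fin a ⊕ Fin c}
    (hf : Function.Involutive f) {x y : Fin a ⊕ Fin c}
    (h : canon f x = canon f y) : pairRel f x y := by
  have hx : x = canon f x ∨ x = f (canon f x) := by
    unfold canon; split
    · exact Or.inl rfl
    · exact Or.inr (hf x).symm
  have hy : y = canon f y ∨ y = f (canon f y) := by
    unfold canon; split
    · exact Or.inl rfl
    · exact Or.inr (hf y).symm
  rw [← h] at hy
  generalize canon f x = z at hx hy
  rcases hx with rfl | rfl <;> rcases hy with rfl | rfl
  · exact Or.inl rfl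
  · exact Or.inr rfl
  · exact Or.inr (hf _).symm
  · exact Or.inl rfl

section Stack2
variable {a b c : ℕ}

/-- the generating relation used by `stackRel` -/
def sgen (P : (Fin a ⊕ Fin b) → (Fin a ⊕ Fin b) → Prop)
    (Q : (Fin b ⊕ Fin c) → (Fin b ⊕ Fin c) → Prop) :
    (Fin a ⊕ (Fin b ⊕ Fin c)) → (Fin a ⊕ (Fin b ⊕ Fin c)) → Prop := fun s t =>
  (∃ u v, P u v ∧ s = ιtop u ∧ t = ιtop v) ∨
    (∃ u v, Q u v ∧ s = ιbot (a := a) u ∧ t = ιbot (a := a) v)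

theorem stackRel_def (P : (Fin a ⊕ Fin b) → (Fin a ⊕ Fin b) → Prop)
    (Q : (Fin b ⊕ Fin c) → (Fin b ⊕ Fin c) → Prop) (x y : Fin a ⊕ Fin c) :
    stackRel P Q x y ↔ Relation.EqvGen (sgen P Q) (ιout x) (ιout y) := Iff.rfl

theorem sgenP {P : (Fin a ⊕ Fin b) → (Fin a ⊕ Fin b) → Prop}
    {Q : (Fin b ⊕ Fin c) → (Fin b ⊕ Fin c) → Prop} {u v : Fin a ⊕ Fin b}
    (h : P u v) : Relation.EqvGen (sgen P Q) (ιtop u) (ιtop v) :=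
  Relation.EqvGen.rel _ _ (Or.inl ⟨u, v, h, rfl, rfl⟩)

theorem sgenQ {P : (Fin a ⊕ Fin b) → (Fin a ⊕ Fin b) → Prop}
    {Q : (Fin b ⊕ Fin c) → (Fin b ⊕ Fin c) → Prop} {u v : Fin b ⊕ Fin c}
    (h : Q u v) : Relation.EqvGen (sgen P Q) (ιbot (a := a) u) (ιbot (a := a) v) :=
  Relation.EqvGen.rel _ _ (Or.inr ⟨u, v, h, rfl, rfl⟩)

/-- Main stacking lemma: verify a stack composition via a constant function. -/
theorem stack_iff (P : (Fin a ⊕ Fin b) → (Fin a ⊕ Fin b) → Prop)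
    (Q : (Fin b ⊕ Fin c) → (Fin b ⊕ Fin c) → Prop)
    (f : Fin a ⊕ Fin c → Fin a ⊕ Fin c) (hf : Function.Involutive f)
    (φ : (Fin a ⊕ (Fin b ⊕ Fin c)) → (Fin a ⊕ Fin c))
    (hP : ∀ u v, P u v → φ (ιtop u) = φ (ιtop v))
    (hQ : ∀ u v, Q u v → φ (ιbot (a := a) u) = φ (ιbot (a := a) v))
    (hout : ∀ x, φ (ιout (b := b) x) = canon f x)
    (hpath : ∀ x, stackRel P Q x (f x)) :
    ∀ x y, stackRel P Q x y ↔ pairRel f x y := by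
  intro x y
  constructor
  · intro h
    rw [stackRel_def] at h
    have hc : φ (ιout (b := b) x) = φ (ιout (b := b) y) := by
      refine eqvGen_constant φ _ ?_ h
      rintro s t (⟨u, v, huv, rfl, rfl⟩ | ⟨u, v, huv, rfl, rfl⟩)
      · exact hP u v huv
      · exact hQ u v huv
    rw [hout, hout] at hc
    exact canon_eq hf hc
  · rintro (rfl | rfl)
    · exact Relation.EqvGen.refl _
    · exact hpath x

end Stack2

theorem planRel_eq {a b : ℕ} {pl : Plan a b} {P : (Fin a ⊕ Fin b) → (Fin a ⊕ Fin b) → Prop}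
    (h : Realizes pl P) : planRel pl = P :=
  funext fun x => funext fun y => propext (h x y)

theorem realizes_cons_of {a b c : ℕ} (r : Row a b) (pl : Plan b c)
    (g : Fin b ⊕ Fin c → Fin b ⊕ Fin c) (f : Fin a ⊕ Fin c → Fin a ⊕ Fin c)
    (hpl : Realizes pl (pairRel g))
    (h : ∀ x y, stackRel (Relation.EqvGen (rowRel r)) (pairRel g) x y ↔ pairRel f x y) :
    Realizes (Plan.cons r pl) (pairRel f) := by
  intro x y
  show stackRel (Relation.EqvGen (rowRel r)) (planRel pl) x y ↔ _
  rw [planRel_eq hpl]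
  exact h x y

theorem neg_one_le_planHt {a b : ℕ} (pl : Plan a b) : -1 ≤ planHt pl := by
  induction pl with
  | nil a => exact le_refl _
  | cons r rest ih =>
    refine le_trans ih ?_
    exact le_max_right _ _

section CapStep

variable {w c : ℕ}

/-- embedding `Fin w ⊕ Fin c → Fin (w+2) ⊕ Fin c` -/
def emb {w c : ℕ} : Fin w ⊕ Fin c → Fin (w + 2) ⊕ Fin c
  | .inl j => .inl ⟨j.val, by omega⟩
  | .inr k => .inr k

theorem emb_inj {w c : ℕ} : Function.Injective (emb (w := w) (c := c)) := by
  rintro (i | i) (j | j) h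
  · simp only [emb, Sum.inl.injEq, Fin.mk.injEq] at h
    exact congrArg Sum.inl (Fin.ext h)
  · exact absurd h (by simp [emb])
  · exact absurd h (by simp [emb])
  · simp only [emb, Sum.inr.injEq] at h
    exact congrArg Sum.inr h

theorem emb_eq_inr {w c : ℕ} {m : Fin w ⊕ Fin c} {k : Fin c} (h : emb m = .inr k) :
    m = .inr k := by
  rcases m with j | k'
  · exact absurd h (by simp [emb])
  · simpa [emb] using h

theorem emb_eq_inl {w c : ℕ} {m : Fin w ⊕ Fin c} {i : Fin (w + 2)} (h : emb m = .inl i) :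
    ∃ j : Fin w, m = .inl j ∧ j.val = i.val := by
  rcases m with j | k'
  · refine ⟨j, rfl, ?_⟩
    have h2 : (Sum.inl (⟨j.val, by omega⟩ : Fin (w + 2)) : Fin (w + 2) ⊕ Fin c) = .inl i := h
    exact congrArg Fin.val (Sum.inl.inj h2)
  · exact absurd h (by simp [emb])

/-- stripping `Fin (w+2) ⊕ Fin c → Fin w ⊕ Fin c` with default `k0` -/
def strip (k0 : Fin c) : Fin (w + 2) ⊕ Fin c → Fin w ⊕ Fin c
  | .inl i => if h : i.val < w then .inl ⟨i.val, h⟩ else .inr k0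
  | .inr k => .inr k

/-- the partition under a cap row -/
def capG (k0 : Fin c) (f : Fin (w + 2) ⊕ Fin c → Fin (w + 2) ⊕ Fin c) :
    Fin w ⊕ Fin c → Fin w ⊕ Fin c := fun x => strip k0 (f (emb x))

variable (k0 : Fin c) (f : Fin (w + 2) ⊕ Fin c → Fin (w + 2) ⊕ Fin c)

theorem cap_snd (hf : Function.Involutive f)
    (hcap : f (.inl ⟨w, by omega⟩) = .inl ⟨w + 1, by omega⟩) :
    f (.inl ⟨w + 1, by omega⟩) = .inl ⟨w, by omega⟩ := by
  rw [← hcap, hf]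

theorem cap_notfoot (hf : Function.Involutive f)
    (hcap : f (.inl ⟨w, by omega⟩) = .inl ⟨w + 1, by omega⟩)
    (x : Fin w ⊕ Fin c) (i : Fin (w + 2)) (h : f (emb x) = .inl i) : i.val < w := by
  by_contra hlt
  have hiv : i.val = w ∨ i.val = w + 1 := by have := i.isLt; omega
  have hfi : f (.inl i) = emb x := by rw [← h, hf]
  rcases hiv with hiv | hiv
  · rw [show (Sum.inl i : Fin (w + 2) ⊕ Fin c) = .inl ⟨w, by omega⟩ from
      congrArg Sum.inl (Fin.ext hiv), hcap] at hfi
    obtain ⟨j', _, hv⟩ := emb_eq_inl hfi.symm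
    have hv' : j'.val = w + 1 := hv.trans rfl
    have := j'.isLt; omega
  · rw [show (Sum.inl i : Fin (w + 2) ⊕ Fin c) = .inl ⟨w + 1, by omega⟩ from
      congrArg Sum.inl (Fin.ext hiv), cap_snd f hf hcap] at hfi
    obtain ⟨j', _, hv⟩ := emb_eq_inl hfi.symm
    have hv' : j'.val = w := hv.trans rfl
    have := j'.isLt; omega

theorem cap_key (hf : Function.Involutive f)
    (hcap : f (.inl ⟨w, by omega⟩) = .inl ⟨w + 1, by omega⟩) (x : Fin w ⊕ Fin c) :
    emb (capG k0 f x) = f (emb x) := by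
  cases hz : f (emb x) with
  | inl i =>
    have hi := cap_notfoot f hf hcap x i hz
    have h1 : capG k0 f x = .inl ⟨i.val, hi⟩ := by
      show strip k0 (f (emb x)) = _
      rw [hz]
      exact dif_pos hi
    rw [h1]
    exact congrArg Sum.inl (Fin.ext rfl)
  | inr k =>
    show emb (strip k0 (f (emb x))) = _
    rw [hz]
    rfl

theorem cap_g_invol (hf : Function.Involutive f)
    (hcap : f (.inl ⟨w, by omega⟩) = .inl ⟨w + 1, by omega⟩) :
    Function.Involutive (capG k0 f) := by
  intro x
  apply emb_inj
  rw [cap_key k0 f hf hcap, cap_key k0 f hf hcap, hf]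

theorem cap_g_fpf (hf : Function.Involutive f) (hfp : ∀ x, f x ≠ x)
    (hcap : f (.inl ⟨w, by omega⟩) = .inl ⟨w + 1, by omega⟩)
    (x : Fin w ⊕ Fin c) : capG k0 f x ≠ x := by
  intro h
  have : emb (capG k0 f x) = emb x := by rw [h]
  rw [cap_key k0 f hf hcap] at this
  exact hfp (emb x) this

/-- trace function for the cap row -/
def traceCap : Fin (w + 2) ⊕ (Fin w ⊕ Fin c) → Fin (w + 2) ⊕ Fin c
  | .inl i => .inl i
  | .inr m => emb m

theorem cap_step (hf : Function.Involutive f)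
    (hcap : f (.inl ⟨w, by omega⟩) = .inl ⟨w + 1, by omega⟩)
    (pl : Plan w c) (hpl : Realizes pl (pairRel (capG k0 f))) :
    Realizes (Plan.cons (Row.cap w 0) pl) (pairRel f) := by
  have key : ∀ x y, stackRel (a := w + 2) (b := w) (c := c)
      (Relation.EqvGen (rowRel (Row.cap w 0))) (pairRel (capG k0 f)) x y ↔ pairRel f x y := by
    apply stack_iff _ _ f hf (fun z => canon f (traceCap z))
    · -- hP
      intro u v h
      refine eqvGen_constant (fun z => canon f (traceCap (ιtop z))) _ ?_ h
      rintro (i | i) (j | j) hr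
      · obtain ⟨h1, h2⟩ := hr
        show canon f (.inl i) = canon f (.inl j)
        rw [show (Sum.inl i : Fin (w + 2) ⊕ Fin c) = .inl ⟨w, by omega⟩ from
            congrArg Sum.inl (Fin.ext h1),
          show (Sum.inl j : Fin (w + 2) ⊕ Fin c) = .inl ⟨w + 1, by omega⟩ from
            congrArg Sum.inl (Fin.ext h2), ← hcap, canon_f hf]
      · rcases hr with ⟨h1, h2⟩ | ⟨h1, h2⟩
        · show canon f (.inl i) = canon f (emb (.inl j))
          congr 1
          simp only [emb]
          exact congrArg Sum.inl (Fin.ext (by simpa using h2.symm))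
        · exact absurd h1 (by have := i.isLt; omega)
      · exact hr.elim
      · exact hr.elim
    · -- hQ
      rintro u v (rfl | rfl)
      · rfl
      · show canon f (emb u) = canon f (emb (capG k0 f u))
        rw [cap_key k0 f hf hcap, canon_f hf]
    · -- hout
      rintro (i | k) <;> rfl
    · -- hpath
      rintro (i | k)
      · rcases lt_trichotomy i.val w with hi | hi | hi
        · -- i < w : through strand
          rw [stackRel_def]
          have e1 := sgenP (Q := pairRel (capG k0 f))
            (Relation.EqvGen.rel (r := rowRel (Row.cap w 0)) (Sum.inl i)
              (Sum.inr (⟨i.val, hi⟩ : Fin w)) (Or.inl ⟨hi, rfl⟩))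
          have e2 := sgenQ (P := Relation.EqvGen (rowRel (Row.cap w 0)))
            (Q := pairRel (capG k0 f)) (u := .inl ⟨i.val, hi⟩)
            (v := capG k0 f (.inl ⟨i.val, hi⟩)) (Or.inr rfl)
          have hembi : emb (.inl (⟨i.val, hi⟩ : Fin w)) = (.inl i : Fin (w + 2) ⊕ Fin c) := rfl
          cases hz : f (.inl i) with
          | inl j =>
            have hjw : j.val < w := cap_notfoot f hf hcap (.inl ⟨i.val, hi⟩) j
              (by rw [hembi, hz])
            have hg : capG k0 f (.inl ⟨i.val, hi⟩) = .inl ⟨j.val, hjw⟩ := by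
              apply emb_inj
              rw [cap_key k0 f hf hcap, hembi, hz]
              rfl
            rw [hg] at e2
            have e3 := sgenP (Q := pairRel (capG k0 f))
              (Relation.EqvGen.rel (r := rowRel (Row.cap w 0)) (Sum.inl j)
                (Sum.inr (⟨j.val, hjw⟩ : Fin w)) (Or.inl ⟨hjw, rfl⟩))
            exact (e1.trans _ _ _ e2).trans _ _ _ (e3.symm _ _)
          | inr k =>
            have hg : capG k0 f (.inl ⟨i.val, hi⟩) = .inr k := by
              apply emb_inj
              rw [cap_key k0 f hf hcap, hembi, hz]
              rfl
            rw [hg] at e2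
            exact e1.trans _ _ _ e2
        · -- i = w
          rw [stackRel_def]
          rw [show (Sum.inl i : Fin (w + 2) ⊕ Fin c) = .inl ⟨w, by omega⟩ from
            congrArg Sum.inl (Fin.ext hi), hcap]
          exact sgenP (Q := pairRel (capG k0 f)) (Relation.EqvGen.rel (r := rowRel (Row.cap w 0))
            (Sum.inl ⟨w, by omega⟩) (Sum.inl ⟨w + 1, by omega⟩) ⟨rfl, rfl⟩)
        · -- i = w + 1
          have hi1 : i.val = w + 1 := by have := i.isLt; omega
          rw [stackRel_def]
          rw [show (Sum.inl i : Fin (w + 2) ⊕ Fin c) = .inl ⟨w + 1, by omega⟩ from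
            congrArg Sum.inl (Fin.ext hi1), cap_snd f hf hcap]
          exact (sgenP (Q := pairRel (capG k0 f)) (Relation.EqvGen.rel (r := rowRel (Row.cap w 0))
            (Sum.inl ⟨w, by omega⟩) (Sum.inl ⟨w + 1, by omega⟩) ⟨rfl, rfl⟩)).symm _ _
      · -- bottom boundary point k
        rw [stackRel_def]
        have e2 := sgenQ (P := Relation.EqvGen (rowRel (Row.cap w 0)))
          (Q := pairRel (capG k0 f)) (u := .inr k) (v := capG k0 f (.inr k)) (Or.inr rfl)
        have hembk : emb (.inr k) = (.inr k : Fin (w + 2) ⊕ Fin c) := rfl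
        cases hz : f (.inr k) with
        | inl j =>
          have hjw : j.val < w := cap_notfoot f hf hcap (.inr k) j (by rw [hembk, hz])
          have hg : capG k0 f (.inr k) = .inl ⟨j.val, hjw⟩ := by
            apply emb_inj
            rw [cap_key k0 f hf hcap, hembk, hz]
            rfl
          rw [hg] at e2
          have e3 := sgenP (Q := pairRel (capG k0 f))
            (Relation.EqvGen.rel (r := rowRel (Row.cap w 0)) (Sum.inl j)
              (Sum.inr (⟨j.val, hjw⟩ : Fin w)) (Or.inl ⟨hjw, rfl⟩))
          exact e2.trans _ _ _ (e3.symm _ _)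
        | inr k' =>
          have hg : capG k0 f (.inr k) = .inr k' := by
            apply emb_inj
            rw [cap_key k0 f hf hcap, hembk, hz]
            rfl
          rw [hg] at e2
          exact e2
  exact realizes_cons_of _ _ _ _ hpl key

end CapStep



section CupStep

variable {w c : ℕ} (k k' : Fin c) (f : Fin w ⊕ Fin c → Fin w ⊕ Fin c)

/-- the partition above a cup row -/
def cupG : Fin (w + 2) ⊕ Fin c → Fin (w + 2) ⊕ Fin c
  | .inl j =>
      if h : j.val < w then emb (f (.inl ⟨j.val, h⟩))
      else if j.val = w then .inr k else .inr k'
  | .inr t =>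
      if t = k then .inl ⟨w, by omega⟩
      else if t = k' then .inl ⟨w + 1, by omega⟩
      else emb (f (.inr t))

variable {k k' f}

theorem cupG_lt {j : Fin (w + 2)} (h : j.val < w) :
    cupG k k' f (.inl j) = emb (f (.inl ⟨j.val, h⟩)) := dif_pos h

theorem cupG_w {j : Fin (w + 2)} (h : j.val = w) :
    cupG k k' f (.inl j) = .inr k := by
  show dite _ _ _ = _
  rw [dif_neg (by omega), if_pos h]

theorem cupG_w1 {j : Fin (w + 2)} (h : j.val = w + 1) :
    cupG k k' f (.inl j) = .inr k' := by
  show dite _ _ _ = _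
  rw [dif_neg (by omega), if_neg (by omega)]

theorem cupG_k : cupG k k' f (.inr k) = .inl ⟨w, by omega⟩ := if_pos rfl

theorem cupG_k' (hkk' : k ≠ k') : cupG k k' f (.inr k') = .inl ⟨w + 1, by omega⟩ := by
  show ite _ _ _ = _
  rw [if_neg (Ne.symm hkk'), if_pos rfl]

theorem cupG_t {t : Fin c} (h1 : t ≠ k) (h2 : t ≠ k') :
    cupG k k' f (.inr t) = emb (f (.inr t)) := by
  show ite _ _ _ = _
  rw [if_neg h1, if_neg h2]

/-- points of the middle boundary avoiding the cup feet images -/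
def NotFoot (k k' : Fin c) (z : Fin w ⊕ Fin c) : Prop := z ≠ .inr k ∧ z ≠ .inr k'

theorem cup_snd (hf : Function.Involutive f) (hk : f (.inr k) = .inr k') :
    f (.inr k') = .inr k := by rw [← hk, hf]

theorem cup_nf (hf : Function.Involutive f) (hk : f (.inr k) = .inr k')
    {z : Fin w ⊕ Fin c} (h : NotFoot k k' z) : NotFoot k k' (f z) := by
  constructor
  · intro hc
    exact h.2 (by rw [← hf z, hc, ← cup_snd hf hk, hf])
  · intro hc
    exact h.1 (by rw [← hf z, hc, ← hk, hf])

theorem cup_key (hk : f (.inr k) = .inr k') {z : Fin w ⊕ Fin c} (h : NotFoot k k' z) :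
    cupG k k' f (emb z) = emb (f z) := by
  rcases z with j | t
  · show cupG k k' f (.inl ⟨j.val, by omega⟩) = _
    rw [cupG_lt (show ((⟨j.val, by omega⟩ : Fin (w + 2))).val < w from j.isLt)]
  · have h1 : t ≠ k := fun hc => h.1 (by rw [hc])
    have h2 : t ≠ k' := fun hc => h.2 (by rw [hc])
    show cupG k k' f (.inr t) = _
    rw [cupG_t h1 h2]

theorem cup_g_invol (hf : Function.Involutive f) (hkk' : k ≠ k')
    (hk : f (.inr k) = .inr k') : Function.Involutive (cupG k k' f) := by
  rintro (j | t)
  · rcases lt_trichotomy j.val w with hj | hj | hj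
    · have hz0 : (Sum.inl j : Fin (w + 2) ⊕ Fin c) = emb (.inl ⟨j.val, hj⟩) := rfl
      have nf : NotFoot k k' (.inl (⟨j.val, hj⟩ : Fin w)) := by
        constructor <;> simp
      rw [hz0, cup_key hk nf, cup_key hk (cup_nf hf hk nf), hf]
    · rw [cupG_w hj, cupG_k]
      exact congrArg Sum.inl (Fin.ext hj.symm)
    · have hj1 : j.val = w + 1 := by have := j.isLt; omega
      rw [cupG_w1 hj1, cupG_k' hkk']
      exact congrArg Sum.inl (Fin.ext hj1.symm)
  · rcases eq_or_ne t k with rfl | h1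
    · rw [cupG_k, cupG_w rfl]
    · rcases eq_or_ne t k' with rfl | h2
      · rw [cupG_k' hkk', cupG_w1 rfl]
      · have nf : NotFoot k k' (.inr t : Fin w ⊕ Fin c) := by
          constructor <;> simp [h1, h2]
        have hz0 : (Sum.inr t : Fin (w + 2) ⊕ Fin c) = emb (.inr t) := rfl
        rw [hz0, cup_key hk nf, cup_key hk (cup_nf hf hk nf), hf]

theorem cup_g_fpf (hf : Function.Involutive f) (hfp : ∀ x, f x ≠ x) (hkk' : k ≠ k')
    (hk : f (.inr k) = .inr k') : ∀ x, cupG k k' f x ≠ x := by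
  rintro (j | t) hx
  · rcases lt_trichotomy j.val w with hj | hj | hj
    · rw [show (Sum.inl j : Fin (w + 2) ⊕ Fin c) = emb (.inl ⟨j.val, hj⟩) from rfl,
        cup_key hk (by constructor <;> simp)] at hx
      exact hfp _ (emb_inj hx)
    · rw [cupG_w hj] at hx
      exact absurd hx (by simp)
    · have hj1 : j.val = w + 1 := by have := j.isLt; omega
      rw [cupG_w1 hj1] at hx
      exact absurd hx (by simp)
  · rcases eq_or_ne t k with rfl | h1
    · rw [cupG_k] at hx
      exact absurd hx (by simp)
    · rcases eq_or_ne t k' with rfl | h2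
      · rw [cupG_k' hkk'] at hx
        exact absurd hx (by simp)
      · rw [cupG_t h1 h2] at hx
        exact hfp _ (emb_inj (a₂ := Sum.inr t) hx)

/-- trace function for the cup row -/
def traceCup (k k' : Fin c) : Fin w ⊕ (Fin (w + 2) ⊕ Fin c) → Fin w ⊕ Fin c
  | .inl i => .inl i
  | .inr (.inl j) =>
      if h : j.val < w then .inl ⟨j.val, h⟩ else if j.val = w then .inr k else .inr k'
  | .inr (.inr t) => .inr t

theorem cup_step (hf : Function.Involutive f) (hkk' : k ≠ k') (hk : f (.inr k) = .inr k')
    (pl : Plan (w + 2) c) (hpl : Realizes pl (pairRel (cupG k k' f))) :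
    Realizes (Plan.cons (Row.cup w 0) pl) (pairRel f) := by
  have hk' : f (.inr k') = .inr k := cup_snd hf hk
  have key : ∀ x y, stackRel (a := w) (b := w + 2) (c := c)
      (Relation.EqvGen (rowRel (Row.cup w 0))) (pairRel (cupG k k' f)) x y ↔ pairRel f x y := by
    apply stack_iff _ _ f hf (fun z => canon f (traceCup k k' z))
    · -- hP
      intro u v h
      refine eqvGen_constant (fun z => canon f (traceCup k k' (ιtop z))) _ ?_ h
      rintro (i | i) (j | j) hr
      · exact hr.elim
      · -- inl i, inr j : vertical strand
        rcases hr with ⟨h1, h2⟩ | ⟨h1, h2⟩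
        · show canon f (.inl i) = canon f (traceCup k k' (.inr (.inl j)))
          have : traceCup k k' (w := w) (.inr (.inl j)) = .inl ⟨j.val, by omega⟩ := dif_pos (by omega)
          rw [this]
          congr 1
          exact congrArg Sum.inl (Fin.ext h2.symm)
        · exact absurd h1 (by have := i.isLt; omega)
      · exact hr.elim
      · -- inr i, inr j : the cup itself
        obtain ⟨h1, h2⟩ := hr
        show canon f (traceCup k k' (.inr (.inl i))) = canon f (traceCup k k' (.inr (.inl j)))
        have hi : traceCup k k' (w := w) (.inr (.inl i)) = .inr k := by
          show dite _ _ _ = _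
          rw [dif_neg (by omega), if_pos h1]
        have hj : traceCup k k' (w := w) (.inr (.inl j)) = .inr k' := by
          show dite _ _ _ = _
          rw [dif_neg (by omega), if_neg (by omega)]
        rw [hi, hj, ← hk, canon_f hf]
    · -- hQ
      rintro u v (rfl | rfl)
      · rfl
      · show canon f (traceCup k k' (.inr u)) = canon f (traceCup k k' (.inr (cupG k k' f u)))
        rcases u with j | t
        · rcases lt_trichotomy j.val w with hj | hj | hj
          · rw [cupG_lt hj]
            have h1 : traceCup k k' (w := w) (.inr (.inl j)) = .inl ⟨j.val, hj⟩ := dif_pos hj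
            have h2 : ∀ z : Fin w ⊕ Fin c, traceCup k k' (w := w) (.inr (emb z)) = z := by
              rintro (j' | t')
              · exact dif_pos j'.isLt
              · rfl
            rw [h1, h2, ← canon_f hf (.inl ⟨j.val, hj⟩)]
          · rw [cupG_w hj]
            have h1 : traceCup k k' (w := w) (.inr (.inl j)) = .inr k := by
              show dite _ _ _ = _
              rw [dif_neg (by omega), if_pos hj]
            rw [h1]
            rfl
          · have hj1 : j.val = w + 1 := by have := j.isLt; omega
            rw [cupG_w1 hj1]
            have h1 : traceCup k k' (w := w) (.inr (.inl j)) = .inr k' := by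
              show dite _ _ _ = _
              rw [dif_neg (by omega), if_neg (by omega)]
            rw [h1]
            rfl
        · have htr : ∀ z : Fin w ⊕ Fin c, traceCup k k' (w := w) (.inr (emb z)) = z := by
            rintro (j' | t')
            · exact dif_pos j'.isLt
            · rfl
          have htrw : traceCup (w := w) k k' (.inr (.inl ⟨w, by omega⟩)) = .inr k := by
            show dite _ _ _ = _
            rw [dif_neg (show ¬ (w < w) by omega), if_pos (show w = w from rfl)]
          have htrw1 : traceCup (w := w) k k' (.inr (.inl ⟨w + 1, by omega⟩)) = .inr k' := by
            show dite _ _ _ = _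
            rw [dif_neg (show ¬ (w + 1 < w) by omega), if_neg (show ¬ (w + 1 = w) by omega)]
          rcases eq_or_ne t k with h0 | h1
          · rw [h0, cupG_k, htrw]
            rfl
          · rcases eq_or_ne t k' with h0 | h2
            · rw [h0, cupG_k' hkk', htrw1]
              rfl
            · rw [cupG_t h1 h2]
              show canon f (.inr t) = canon f (traceCup k k' (.inr (emb (f (.inr t)))))
              rw [htr, canon_f hf]
    · -- hout
      rintro (i | t) <;> rfl
    · -- hpath
      rintro (i | t)
      · -- top point i : Fin w
        rw [stackRel_def]
        have hiw : i.val < w := i.isLt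
        have e1 := sgenP (Q := pairRel (cupG k k' f))
          (Relation.EqvGen.rel (r := rowRel (Row.cup w 0)) (Sum.inl i)
            (Sum.inr (⟨i.val, by omega⟩ : Fin (w + 2))) (Or.inl ⟨hiw, rfl⟩))
        have e2 := sgenQ (P := Relation.EqvGen (rowRel (Row.cup w 0)))
          (Q := pairRel (cupG k k' f)) (u := .inl ⟨i.val, by omega⟩)
          (v := cupG k k' f (.inl ⟨i.val, by omega⟩)) (Or.inr rfl)
        have hg : cupG k k' f (.inl ⟨i.val, by omega⟩) = emb (f (.inl i)) := by
          rw [cupG_lt (show ((⟨i.val, by omega⟩ : Fin (w + 2))).val < w from hiw)]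
        rw [hg] at e2
        cases hz : f (.inl i) with
        | inl j' =>
          rw [hz] at e2
          have e3 := sgenP (Q := pairRel (cupG k k' f))
            (Relation.EqvGen.rel (r := rowRel (Row.cup w 0)) (Sum.inl j')
              (Sum.inr (⟨j'.val, by omega⟩ : Fin (w + 2))) (Or.inl ⟨j'.isLt, rfl⟩))
          exact (e1.trans _ _ _ e2).trans _ _ _ (e3.symm _ _)
        | inr t' =>
          rw [hz] at e2
          exact e1.trans _ _ _ e2
      · -- bottom point t : Fin c
        rw [stackRel_def]
        rcases eq_or_ne t k with h0 | h1
        · rw [h0, hk]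
          have e1 := sgenQ (P := Relation.EqvGen (rowRel (Row.cup w 0)))
            (Q := pairRel (cupG k k' f)) (u := .inr k) (v := cupG k k' f (.inr k)) (Or.inr rfl)
          rw [cupG_k] at e1
          have e2 := sgenP (Q := pairRel (cupG k k' f))
            (Relation.EqvGen.rel (r := rowRel (Row.cup w 0))
              (Sum.inr (⟨w, by omega⟩ : Fin (w + 2)))
              (Sum.inr (⟨w + 1, by omega⟩ : Fin (w + 2))) ⟨rfl, rfl⟩)
          have e3 := sgenQ (P := Relation.EqvGen (rowRel (Row.cup w 0)))
            (Q := pairRel (cupG k k' f)) (u := .inl ⟨w + 1, by omega⟩)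
            (v := cupG k k' f (.inl ⟨w + 1, by omega⟩)) (Or.inr rfl)
          rw [cupG_w1 rfl] at e3
          exact (e1.trans _ _ _ e2).trans _ _ _ e3
        · rcases eq_or_ne t k' with h0 | h2
          · rw [h0, hk']
            have e1 := sgenQ (P := Relation.EqvGen (rowRel (Row.cup w 0)))
              (Q := pairRel (cupG k k' f)) (u := .inr k') (v := cupG k k' f (.inr k'))
              (Or.inr rfl)
            rw [cupG_k' hkk'] at e1
            have e2 := sgenP (Q := pairRel (cupG k k' f))
              (Relation.EqvGen.rel (r := rowRel (Row.cup w 0))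
                (Sum.inr (⟨w, by omega⟩ : Fin (w + 2)))
                (Sum.inr (⟨w + 1, by omega⟩ : Fin (w + 2))) ⟨rfl, rfl⟩)
            have e3 := sgenQ (P := Relation.EqvGen (rowRel (Row.cup w 0)))
              (Q := pairRel (cupG k k' f)) (u := .inl ⟨w, by omega⟩)
              (v := cupG k k' f (.inl ⟨w, by omega⟩)) (Or.inr rfl)
            rw [cupG_w rfl] at e3
            exact (e1.trans _ _ _ (e2.symm _ _)).trans _ _ _ e3
          · have e1 := sgenQ (P := Relation.EqvGen (rowRel (Row.cup w 0)))
              (Q := pairRel (cupG k k' f)) (u := .inr t) (v := cupG k k' f (.inr t))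
              (Or.inr rfl)
            rw [cupG_t h1 h2] at e1
            cases hz : f (.inr t) with
            | inl j' =>
              rw [hz] at e1
              have e3 := sgenP (Q := pairRel (cupG k k' f))
                (Relation.EqvGen.rel (r := rowRel (Row.cup w 0)) (Sum.inl j')
                  (Sum.inr (⟨j'.val, by omega⟩ : Fin (w + 2))) (Or.inl ⟨j'.isLt, rfl⟩))
              exact e1.trans _ _ _ (e3.symm _ _)
            | inr t' =>
              rw [hz] at e1
              exact e1
  exact realizes_cons_of _ _ _ _ hpl key

end CupStep


section SwapStep

variable {m c : ℕ}

/-- a swap row cast to width `m` -/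
def swapRow (w v m : ℕ) (h : w + 2 + v = m) : Row m m := h ▸ Row.swap w v

/-- the connection relation of a swap at `w` -/
def swapRel (w : ℕ) {m : ℕ} : (Fin m ⊕ Fin m) → (Fin m ⊕ Fin m) → Prop := fun x y =>
  match x, y with
  | .inl i, .inr j => (i.val = w ∧ j.val = w + 1) ∨ (i.val = w + 1 ∧ j.val = w) ∨
      (i.val ≠ w ∧ i.val ≠ w + 1 ∧ j.val = i.val)
  | _, _ => False

theorem rowRel_swapRow {w v m : ℕ} (h : w + 2 + v = m) (x y : Fin m ⊕ Fin m) :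
    rowRel (swapRow w v m h) x y ↔ swapRel w x y := by
  subst h
  rcases x with i | i <;> rcases y with j | j <;> exact Iff.rfl

theorem rowHt_swapRow {w v m : ℕ} (h : w + 2 + v = m) : rowHt (swapRow w v m h) = (w : ℤ) := by
  subst h
  rfl

/-- the adjacent transposition on `Fin m` -/
def sigma (w : ℕ) {m : ℕ} (hw : w + 1 < m) : Fin m → Fin m := fun i =>
  if i.val = w then ⟨w + 1, hw⟩ else if i.val = w + 1 then ⟨w, by omega⟩ else i

theorem sigma_w {w : ℕ} (hw : w + 1 < m) {i : Fin m} (h : i.val = w) :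
    sigma w hw i = ⟨w + 1, hw⟩ := if_pos h

theorem sigma_w1 {w : ℕ} (hw : w + 1 < m) {i : Fin m} (h : i.val = w + 1) :
    sigma w hw i = ⟨w, by omega⟩ := by
  show ite _ _ _ = _
  rw [if_neg (by omega), if_pos h]

theorem sigma_other {w : ℕ} (hw : w + 1 < m) {i : Fin m} (h1 : i.val ≠ w) (h2 : i.val ≠ w + 1) :
    sigma w hw i = i := by
  show ite _ _ _ = _
  rw [if_neg h1, if_neg h2]

theorem sigma_invol {w : ℕ} (hw : w + 1 < m) : Function.Involutive (sigma w hw) := by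
  intro i
  rcases eq_or_ne i.val w with h | h
  · rw [sigma_w hw h, sigma_w1 hw rfl]
    exact Fin.ext h.symm
  · rcases eq_or_ne i.val (w + 1) with h2 | h2
    · rw [sigma_w1 hw h2, sigma_w hw rfl]
      exact Fin.ext h2.symm
    · rw [sigma_other hw h h2, sigma_other hw h h2]

/-- conjugation on the boundary -/
def tconj (w : ℕ) {m c : ℕ} (hw : w + 1 < m) : Fin m ⊕ Fin c → Fin m ⊕ Fin c
  | .inl i => .inl (sigma w hw i)
  | .inr k => .inr k

theorem tconj_invol {w : ℕ} (hw : w + 1 < m) :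
    Function.Involutive (tconj w (c := c) hw) := by
  rintro (i | k)
  · show Sum.inl (sigma w hw (sigma w hw i)) = _
    rw [sigma_invol hw]
  · rfl

/-- the partition under a swap row -/
def swapG (w : ℕ) {m c : ℕ} (hw : w + 1 < m) (f : Fin m ⊕ Fin c → Fin m ⊕ Fin c) :
    Fin m ⊕ Fin c → Fin m ⊕ Fin c := fun x => tconj w hw (f (tconj w hw x))

theorem swapG_invol {w : ℕ} (hw : w + 1 < m) {f : Fin m ⊕ Fin c → Fin m ⊕ Fin c}
    (hf : Function.Involutive f) : Function.Involutive (swapG w hw f) := by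
  intro x
  show tconj w hw (f (tconj w hw (tconj w hw (f (tconj w hw x))))) = x
  rw [tconj_invol hw, hf, tconj_invol hw]

theorem swapG_fpf {w : ℕ} (hw : w + 1 < m) {f : Fin m ⊕ Fin c → Fin m ⊕ Fin c}
    (hf : Function.Involutive f) (hfp : ∀ x, f x ≠ x) : ∀ x, swapG w hw f x ≠ x := by
  intro x hx
  have : f (tconj w hw x) = tconj w hw x := by
    have := congrArg (tconj w hw) hx
    rwa [show tconj w hw (swapG w hw f x) = f (tconj w hw x) from tconj_invol hw _] at this
  exact hfp _ this

theorem swapRel_total {w : ℕ} (hw : w + 1 < m) (i : Fin m) :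
    swapRel w (.inl i) (.inr (sigma w hw i)) := by
  rcases eq_or_ne i.val w with h | h
  · rw [sigma_w hw h]
    exact Or.inl ⟨h, rfl⟩
  · rcases eq_or_ne i.val (w + 1) with h2 | h2
    · rw [sigma_w1 hw h2]
      exact Or.inr (Or.inl ⟨h2, rfl⟩)
    · rw [sigma_other hw h h2]
      exact Or.inr (Or.inr ⟨h, h2, rfl⟩)

/-- trace function for the swap row -/
def traceSwap (w : ℕ) {m c : ℕ} (hw : w + 1 < m) :
    Fin m ⊕ (Fin m ⊕ Fin c) → Fin m ⊕ Fin c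
  | .inl i => .inl i
  | .inr u => tconj w hw u

theorem swap_step {w v : ℕ} (h : w + 2 + v = m) (hw : w + 1 < m)
    (f : Fin m ⊕ Fin c → Fin m ⊕ Fin c) (hf : Function.Involutive f)
    (pl : Plan m c) (hpl : Realizes pl (pairRel (swapG w hw f))) :
    Realizes (Plan.cons (swapRow w v m h) pl) (pairRel f) := by
  have key : ∀ x y, stackRel (a := m) (b := m) (c := c)
      (Relation.EqvGen (rowRel (swapRow w v m h))) (pairRel (swapG w hw f)) x y ↔
        pairRel f x y := by
    apply stack_iff _ _ f hf (fun z => canon f (traceSwap w hw z))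
    · -- hP
      intro u v' hP
      refine eqvGen_constant (fun z => canon f (traceSwap w hw (ιtop z))) _ ?_ hP
      intro u v' hr
      rw [rowRel_swapRow] at hr
      rcases u with i | i <;> rcases v' with j | j
      · exact hr.elim
      · -- inl i, inr j
        show canon f (.inl i) = canon f (.inl (sigma w hw j))
        rcases hr with ⟨h1, h2⟩ | ⟨h1, h2⟩ | ⟨h1, h2, h3⟩
        · rw [sigma_w1 hw h2]
          congr 1
          exact congrArg Sum.inl (Fin.ext h1)
        · rw [sigma_w hw h2]
          congr 1
          exact congrArg Sum.inl (Fin.ext h1)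
        · rw [sigma_other hw (by omega) (by omega)]
          congr 1
          exact congrArg Sum.inl (Fin.ext h3.symm)
      · exact hr.elim
      · exact hr.elim
    · -- hQ
      rintro u v' (rfl | rfl)
      · rfl
      · show canon f (tconj w hw u) = canon f (tconj w hw (swapG w hw f u))
        rw [show tconj w hw (swapG w hw f u) = f (tconj w hw u) from tconj_invol hw _,
          canon_f hf]
    · -- hout
      rintro (i | k) <;> rfl
    · -- hpath
      rintro (i | k)
      · rw [stackRel_def]
        have e1 := sgenP (Q := pairRel (swapG w hw f))
          (Relation.EqvGen.rel (r := rowRel (swapRow w v m h)) (Sum.inl i)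
            (Sum.inr (sigma w hw i)) ((rowRel_swapRow h _ _).mpr (swapRel_total hw i)))
        have e2 := sgenQ (P := Relation.EqvGen (rowRel (swapRow w v m h)))
          (Q := pairRel (swapG w hw f)) (u := .inl (sigma w hw i))
          (v := swapG w hw f (.inl (sigma w hw i))) (Or.inr rfl)
        have hg : swapG w hw f (.inl (sigma w hw i)) = tconj w hw (f (.inl i)) := by
          show tconj w hw (f (tconj w hw (.inl (sigma w hw i)))) = _
          rw [show tconj w hw (.inl (sigma w hw i)) = (.inl i : Fin m ⊕ Fin c) from
            congrArg Sum.inl (sigma_invol hw i)]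
        rw [hg] at e2
        cases hz : f (.inl i) with
        | inl j =>
          rw [hz] at e2
          have e3 := sgenP (Q := pairRel (swapG w hw f))
            (Relation.EqvGen.rel (r := rowRel (swapRow w v m h)) (Sum.inl j)
              (Sum.inr (sigma w hw j)) ((rowRel_swapRow h _ _).mpr (swapRel_total hw j)))
          exact (e1.trans _ _ _ e2).trans _ _ _ (e3.symm _ _)
        | inr k' =>
          rw [hz] at e2
          exact e1.trans _ _ _ e2
      · rw [stackRel_def]
        have e2 := sgenQ (P := Relation.EqvGen (rowRel (swapRow w v m h)))
          (Q := pairRel (swapG w hw f)) (u := .inr k) (v := swapG w hw f (.inr k)) (Or.inr rfl)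
        have hg : swapG w hw f (.inr k) = tconj w hw (f (.inr k)) := rfl
        rw [hg] at e2
        cases hz : f (.inr k) with
        | inl j =>
          rw [hz] at e2
          have e3 := sgenP (Q := pairRel (swapG w hw f))
            (Relation.EqvGen.rel (r := rowRel (swapRow w v m h)) (Sum.inl j)
              (Sum.inr (sigma w hw j)) ((rowRel_swapRow h _ _).mpr (swapRel_total hw j)))
          exact e2.trans _ _ _ (e3.symm _ _)
        | inr k2 =>
          rw [hz] at e2
          exact e2
  exact realizes_cons_of _ _ _ _ hpl key

end SwapStep


section Sorting

variable {n : ℕ}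

theorem eqvGen_le {α : Type*} {R S : α → α → Prop} (hS : Equivalence S)
    (h : ∀ x y, R x y → S x y) {x y : α} (hr : Relation.EqvGen R x y) : S x y := by
  induction hr with
  | rel u v h' => exact h u v h'
  | refl u => exact hS.refl u
  | symm u v _ ih => exact hS.symm ih
  | trans u v z _ _ ih1 ih2 => exact hS.trans ih1 ih2

theorem nil_step (g : Fin n ⊕ Fin n → Fin n ⊕ Fin n) (hg : Function.Involutive g)
    (hid : ∀ i : Fin n, g (.inl i) = .inr i) :
    Realizes (Plan.nil n) (pairRel g) := by
  have hid2 : ∀ i : Fin n, g (.inr i) = .inl i := fun i => by rw [← hid i, hg]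
  intro x y
  show Relation.EqvGen (idConn n) x y ↔ pairRel g x y
  constructor
  · intro h
    refine eqvGen_le (pairRel_equivalence hg) ?_ h
    rintro (i | i) (j | j) hu
    · exact hu.elim
    · right
      rw [hid i]
      exact congrArg Sum.inr (Fin.ext hu.symm)
    · exact hu.elim
    · exact hu.elim
  · rintro (rfl | rfl)
    · exact Relation.EqvGen.refl x
    · rcases x with i | i
      · rw [hid i]
        exact Relation.EqvGen.rel _ _ (rfl : i.val = i.val)
      · rw [hid2 i]
        exact (Relation.EqvGen.rel (Sum.inl i) (Sum.inr i) (rfl : i.val = i.val)).symm _ _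

/-- the bottom endpoint of the strand from top point `i` -/
def bot (g : Fin n ⊕ Fin n → Fin n ⊕ Fin n) (i : Fin n) : Fin n :=
  match g (.inl i) with
  | .inr k => k
  | .inl _ => i

theorem bot_spec {g : Fin n ⊕ Fin n → Fin n ⊕ Fin n}
    (htop : ∀ i : Fin n, ∃ k, g (.inl i) = .inr k) (i : Fin n) :
    g (.inl i) = .inr (bot g i) := by
  obtain ⟨k, hk⟩ := htop i
  unfold bot
  rw [hk]

theorem bot_inj {g : Fin n ⊕ Fin n → Fin n ⊕ Fin n} (hg : Function.Involutive g)
    (htop : ∀ i : Fin n, ∃ k, g (.inl i) = .inr k) : Function.Injective (bot g) := by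
  intro i j h
  have h2 : g (.inl i) = g (.inl j) := by
    rw [bot_spec htop, bot_spec htop, h]
  have h3 := congrArg g h2
  rw [hg, hg] at h3
  exact Sum.inl.inj h3

/-- inversion count -/
def invc (p : Fin n → Fin n) : ℕ :=
  (Finset.univ.filter fun q : Fin n × Fin n => q.1 < q.2 ∧ p q.2 < p q.1).card

theorem sigma_val {w : ℕ} (hw : w + 1 < n) (i : Fin n) :
    (sigma w hw i).val = if i.val = w then w + 1 else if i.val = w + 1 then w else i.val := by
  unfold sigma
  split_ifs <;> rfl

theorem sigma_lt {w : ℕ} (hw : w + 1 < n) {a b : Fin n} (hab : a < b)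
    (hne : ¬(a.val = w ∧ b.val = w + 1)) : sigma w hw a < sigma w hw b := by
  rw [Fin.lt_def] at hab ⊢
  rw [sigma_val hw a, sigma_val hw b]
  split_ifs <;> omega

theorem invc_pos_of_descent {w : ℕ} (hw : w + 1 < n) {p : Fin n → Fin n}
    (hdesc : p ⟨w + 1, hw⟩ < p ⟨w, by omega⟩) : 0 < invc p := by
  refine Finset.card_pos.mpr ⟨((⟨w, by omega⟩ : Fin n), (⟨w + 1, hw⟩ : Fin n)), ?_⟩
  rw [Finset.mem_filter]
  exact ⟨Finset.mem_univ _, Fin.mk_lt_mk.mpr (by omega), hdesc⟩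

theorem invc_decr {w : ℕ} (hw : w + 1 < n) {p : Fin n → Fin n}
    (hdesc : p ⟨w + 1, hw⟩ < p ⟨w, by omega⟩) :
    invc (fun i => p (sigma w hw i)) < invc p := by
  classical
  have hinj : Function.Injective
      (fun q : Fin n × Fin n => (sigma w hw q.1, sigma w hw q.2)) := by
    intro q1 q2 h
    have h1 := congrArg Prod.fst h
    have h2 := congrArg Prod.snd h
    simp only at h1 h2
    exact Prod.ext ((sigma_invol hw).injective h1) ((sigma_invol hw).injective h2)
  apply lt_of_le_of_lt (le_of_eq (Finset.card_image_of_injective _ hinj).symm)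
  apply Finset.card_lt_card
  rw [Finset.ssubset_iff_of_subset]
  · refine ⟨((⟨w, by omega⟩ : Fin n), (⟨w + 1, hw⟩ : Fin n)), ?_, ?_⟩
    · rw [Finset.mem_filter]
      exact ⟨Finset.mem_univ _, Fin.mk_lt_mk.mpr (by omega), hdesc⟩
    · intro hc
      rw [Finset.mem_image] at hc
      obtain ⟨q0, hq0, heq⟩ := hc
      have h1 : sigma w hw q0.1 = ⟨w, by omega⟩ := congrArg Prod.fst heq
      have h2 : sigma w hw q0.2 = ⟨w + 1, hw⟩ := congrArg Prod.snd heq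
      have e1 : q0.1 = sigma w hw ⟨w, by omega⟩ := by
        rw [← sigma_invol hw q0.1, h1]
      have e2 : q0.2 = sigma w hw ⟨w + 1, hw⟩ := by
        rw [← sigma_invol hw q0.2, h2]
      rw [sigma_w hw rfl] at e1
      rw [sigma_w1 hw rfl] at e2
      rw [Finset.mem_filter] at hq0
      obtain ⟨-, hlt, -⟩ := hq0
      rw [e1, e2] at hlt
      exact absurd (Fin.mk_lt_mk.mp hlt) (by omega)
  · intro q hq
    rw [Finset.mem_image] at hq
    obtain ⟨q0, hq0, rfl⟩ := hq
    rw [Finset.mem_filter] at hq0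
    obtain ⟨-, h1, h2⟩ := hq0
    have h2' : p (sigma w hw q0.2) < p (sigma w hw q0.1) := h2
    have hne : ¬(q0.1.val = w ∧ q0.2.val = w + 1) := by
      rintro ⟨f1, f2⟩
      rw [sigma_w hw f1, sigma_w1 hw f2] at h2'
      exact absurd hdesc (not_lt.mpr (le_of_lt h2'))
    rw [Finset.mem_filter]
    exact ⟨Finset.mem_univ _, sigma_lt hw h1 hne, h2'⟩

theorem descent_exists {p : Fin n → Fin n} (hinj : Function.Injective p)
    (hne : ¬∀ i, p i = i) :
    ∃ w, ∃ hw : w + 1 < n, p ⟨w + 1, hw⟩ < p ⟨w, by omega⟩ := by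
  by_contra hno
  push_neg at hno
  have step : ∀ w (hw : w + 1 < n), p ⟨w, by omega⟩ < p ⟨w + 1, hw⟩ := by
    intro w hw
    rcases lt_trichotomy (p ⟨w, by omega⟩) (p ⟨w + 1, hw⟩) with h | h | h
    · exact h
    · exfalso
      have hval : w = w + 1 := congrArg Fin.val (hinj h)
      omega
    · exact absurd h (not_lt.mpr (hno w hw))
  have le_apply : ∀ r (hr : r < n), r ≤ (p ⟨r, hr⟩).val := by
    intro r
    induction r with
    | zero => intro hr; omega
    | succ r ih =>
      intro hr
      have h1 := ih (by omega)
      have h2 := step r hr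
      rw [Fin.lt_def] at h2
      omega
  have hbij : Function.Bijective p := (Finite.injective_iff_bijective).mp hinj
  have hsum : ∑ i : Fin n, (p i).val = ∑ i : Fin n, i.val :=
    Equiv.sum_comp (Equiv.ofBijective p hbij) (fun i => i.val)
  have hle : ∀ i ∈ Finset.univ, i.val ≤ (p i).val := by
    intro i _
    have := le_apply i.val i.isLt
    simpa using this
  have hpt := (Finset.sum_eq_sum_iff_of_le hle).mp hsum.symm
  apply hne
  intro i
  exact Fin.ext ((hpt i (Finset.mem_univ i)).symm)

theorem sort_plan (N : ℕ) : ∀ (n : ℕ) (g : Fin n ⊕ Fin n → Fin n ⊕ Fin n),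
    1 ≤ n → Function.Involutive g → (∀ i, ∃ k, g (.inl i) = .inr k) →
    invc (bot g) ≤ N →
    ∃ pl : Plan n n, Realizes pl (pairRel g) ∧ planHt pl ≤ (n : ℤ) - 2 := by
  induction N with
  | zero =>
    intro n g hn hg htop hN
    by_cases hid : ∀ i : Fin n, bot g i = i
    · refine ⟨Plan.nil n, nil_step g hg (fun i => by rw [bot_spec htop i, hid i]), ?_⟩
      show (-1 : ℤ) ≤ _
      omega
    · obtain ⟨w, hw, hdesc⟩ := descent_exists (bot_inj hg htop) hid
      exact absurd (invc_pos_of_descent hw hdesc) (by omega)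
  | succ N ih =>
    intro n g hn hg htop hN
    by_cases hid : ∀ i : Fin n, bot g i = i
    · refine ⟨Plan.nil n, nil_step g hg (fun i => by rw [bot_spec htop i, hid i]), ?_⟩
      show (-1 : ℤ) ≤ _
      omega
    · obtain ⟨w, hw, hdesc⟩ := descent_exists (bot_inj hg htop) hid
      set g' := swapG w hw g with hg'def
      have hg' : Function.Involutive g' := swapG_invol hw hg
      have htop' : ∀ i, ∃ k, g' (.inl i) = .inr k := by
        intro i
        refine ⟨bot g (sigma w hw i), ?_⟩
        show tconj w hw (g (tconj w hw (.inl i))) = _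
        show tconj w hw (g (.inl (sigma w hw i))) = _
        rw [bot_spec htop (sigma w hw i)]
        rfl
      have hbot' : bot g' = fun i => bot g (sigma w hw i) := by
        funext i
        have h1 := bot_spec htop' i
        have h2 : g' (.inl i) = .inr (bot g (sigma w hw i)) := by
          show tconj w hw (g (tconj w hw (.inl i))) = _
          show tconj w hw (g (.inl (sigma w hw i))) = _
          rw [bot_spec htop (sigma w hw i)]
          rfl
        rw [h1] at h2
        exact Sum.inr.inj h2
      have hdec : invc (bot g') < invc (bot g) := by
        rw [hbot']
        exact invc_decr hw hdesc
      obtain ⟨pl', hpl', hht'⟩ := ih n g' hn hg' htop' (by omega)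
      refine ⟨Plan.cons (swapRow w (n - w - 2) n (by omega)) pl', ?_, ?_⟩
      · exact swap_step (by omega) hw g hg pl' hpl'
      · show max (rowHt (swapRow w (n - w - 2) n (by omega))) (planHt pl') ≤ _
        rw [rowHt_swapRow]
        exact max_le (by omega) hht'

end Sorting


section Stages

/-- bottom points paired to the bottom -/
def botbot {m n : ℕ} (g : Fin m ⊕ Fin n → Fin m ⊕ Fin n) : Finset (Fin n) :=
  Finset.univ.filter fun k => ∃ k', g (.inr k) = .inr k'

theorem card_lemma {m n : ℕ} (u : Fin m → Fin n) (hu : Function.Injective u) (k k' : Fin n)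
    (hkk' : k ≠ k') (hk : ∀ i, u i ≠ k) (hk' : ∀ i, u i ≠ k') : m + 2 ≤ n := by
  classical
  have hk'mem : k' ∉ Finset.univ.image u := by
    rw [Finset.mem_image]
    rintro ⟨i, -, hi⟩
    exact hk' i hi
  have hkmem : k ∉ insert k' (Finset.univ.image u) := by
    rw [Finset.mem_insert]
    rintro (rfl | hmem)
    · exact hkk' rfl
    · rw [Finset.mem_image] at hmem
      obtain ⟨i, -, hi⟩ := hmem
      exact hk i hi
  have h1 : (insert k (insert k' (Finset.univ.image u))).card = m + 2 := by
    rw [Finset.card_insert_of_notMem hkmem, Finset.card_insert_of_notMem hk'mem,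
      Finset.card_image_of_injective _ hu, Finset.card_univ, Fintype.card_fin]
  have h2 := Finset.card_le_univ (insert k (insert k' (Finset.univ.image u)))
  rw [h1, Fintype.card_fin] at h2
  omega

/-- Stage 2: no pair joins two top points; use cups to absorb the
bottom-to-bottom pairs, then sort. -/
theorem cups_plan (n : ℕ) (hn : 1 ≤ n) (B : ℕ) :
    ∀ (m : ℕ) (g : Fin m ⊕ Fin n → Fin m ⊕ Fin n), m ≤ n →
    Function.Involutive g → (∀ x, g x ≠ x) → (∀ i, ∃ k, g (.inl i) = .inr k) →
    (botbot g).card ≤ B →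
    ∃ pl : Plan m n, Realizes pl (pairRel g) ∧ planHt pl ≤ (n : ℤ) - 2 := by
  induction B with
  | zero =>
    intro m g hmn hg hfp htop hB
    by_cases hbb : ∃ k k' : Fin n, g (.inr k) = .inr k'
    · obtain ⟨k, k', hk⟩ := hbb
      exfalso
      have : k ∈ botbot g := by
        rw [botbot, Finset.mem_filter]
        exact ⟨Finset.mem_univ _, k', hk⟩
      have := Finset.card_pos.mpr ⟨k, this⟩
      omega
    · -- no bottom-bottom pairs: m = n and we can sort
      push_neg at hbb
      have hup : ∀ k : Fin n, ∃ j, g (.inr k) = .inl j := by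
        intro k
        cases hz : g (.inr k) with
        | inl j => exact ⟨j, rfl⟩
        | inr k2 => exact absurd hz (hbb k k2)
      have hnm : n ≤ m := by
        have hvinj : Function.Injective (fun k : Fin n => (hup k).choose) := by
          intro k1 k2 h
          have e1 := (hup k1).choose_spec
          have e2 := (hup k2).choose_spec
          simp only at h
          rw [h] at e1
          have := congrArg g (e1.trans e2.symm)
          rw [hg, hg] at this
          exact Sum.inr.inj this
        exact Fintype.card_fin n ▸ Fintype.card_fin m ▸ Fintype.card_le_of_injective _ hvinj
      have hmn' : m = n := le_antisymm hmn hnm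
      subst hmn'
      exact sort_plan (invc (bot g)) m g (le_trans hn (by omega)) hg htop le_rfl
  | succ B ih =>
    intro m g hmn hg hfp htop hB
    by_cases hbb : ∃ k k' : Fin n, g (.inr k) = .inr k'
    · obtain ⟨k, k', hk⟩ := hbb
      have hkk' : k ≠ k' := by
        intro h
        subst h
        exact hfp _ hk
      -- counting : m + 2 ≤ n
      have hu : ∀ i : Fin m, g (.inl i) = .inr ((htop i).choose) := fun i => (htop i).choose_spec
      have huinj : Function.Injective (fun i : Fin m => (htop i).choose) := by
        intro i1 i2 h
        simp only at h
        have e1 := hu i1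
        rw [h] at e1
        have := congrArg g (e1.trans (hu i2).symm)
        rw [hg, hg] at this
        exact Sum.inl.inj this
      have hm2 : m + 2 ≤ n := by
        refine card_lemma _ huinj k k' hkk' ?_ ?_
        · intro i hc
          have := hu i
          rw [hc] at this
          have h2 := congrArg g this
          rw [hg, hk] at h2
          exact absurd h2 (by simp)
        · intro i hc
          have := hu i
          rw [hc] at this
          have h2 := congrArg g this
          rw [hg, ← this, hg] at h2
          -- g (inr k') = inl i, but g (inr k') = inr k
          have h3 : g (.inr k') = .inr k := by rw [← hk, hg]
          rw [show (Sum.inr k' : Fin m ⊕ Fin n) = g (.inl i) from this.symm, hg] at h3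
          exact absurd h3 (by simp)
      -- the cup step
      have hg' : Function.Involutive (cupG k k' g) := cup_g_invol hg hkk' hk
      have hfp' : ∀ x, cupG k k' g x ≠ x := cup_g_fpf hg hfp hkk' hk
      have htop' : ∀ i : Fin (m + 2), ∃ t, cupG k k' g (.inl i) = .inr t := by
        intro i
        rcases lt_trichotomy i.val m with hi | hi | hi
        · obtain ⟨t, ht⟩ := htop ⟨i.val, hi⟩
          refine ⟨t, ?_⟩
          rw [cupG_lt hi, ht]
          rfl
        · exact ⟨k, cupG_w hi⟩
        · exact ⟨k', cupG_w1 (by have := i.isLt; omega)⟩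
      have hbb' : (botbot (cupG k k' g)).card ≤ B := by
        have hsub : botbot (cupG k k' g) ⊆ botbot g := by
          intro t ht
          rw [botbot, Finset.mem_filter] at ht ⊢
          obtain ⟨-, t2, ht2⟩ := ht
          refine ⟨Finset.mem_univ _, ?_⟩
          rcases eq_or_ne t k with rfl | h1
          · rw [cupG_k] at ht2
            exact absurd ht2 (by simp)
          · rcases eq_or_ne t k' with rfl | h2
            · rw [cupG_k' hkk'] at ht2
              exact absurd ht2 (by simp)
            · rw [cupG_t h1 h2] at ht2
              cases hz : g (.inr t) with
              | inl j => rw [hz] at ht2; exact absurd ht2 (by simp [emb])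
              | inr t3 => exact ⟨t3, rfl⟩
        have hknot : k ∉ botbot (cupG k k' g) := by
          rw [botbot, Finset.mem_filter]
          rintro ⟨-, t2, ht2⟩
          rw [cupG_k] at ht2
          exact absurd ht2 (by simp)
        have hkin : k ∈ botbot g := by
          rw [botbot, Finset.mem_filter]
          exact ⟨Finset.mem_univ _, k', hk⟩
        have := Finset.card_lt_card ((Finset.ssubset_iff_of_subset hsub).mpr ⟨k, hkin, hknot⟩)
        omega
      obtain ⟨pl', hpl', hht'⟩ := ih (m + 2) (cupG k k' g) hm2 hg' hfp' htop' hbb'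
      refine ⟨Plan.cons (Row.cup m 0) pl', cup_step hg hkk' hk pl' hpl', ?_⟩
      show max (rowHt (Row.cup m 0)) (planHt pl') ≤ _
      rw [show rowHt (Row.cup m 0) = -1 from rfl]
      exact max_le (by omega) hht'
    · -- no bottom-bottom : same as base case
      push_neg at hbb
      have hup : ∀ k : Fin n, ∃ j, g (.inr k) = .inl j := by
        intro k
        cases hz : g (.inr k) with
        | inl j => exact ⟨j, rfl⟩
        | inr k2 => exact absurd hz (hbb k k2)
      have hnm : n ≤ m := by
        have hvinj : Function.Injective (fun k : Fin n => (hup k).choose) := by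
          intro k1 k2 h
          have e1 := (hup k1).choose_spec
          have e2 := (hup k2).choose_spec
          simp only at h
          rw [h] at e1
          have := congrArg g (e1.trans e2.symm)
          rw [hg, hg] at this
          exact Sum.inr.inj this
        exact Fintype.card_fin n ▸ Fintype.card_fin m ▸ Fintype.card_le_of_injective _ hvinj
      have hmn' : m = n := le_antisymm hmn hnm
      subst hmn'
      exact sort_plan (invc (bot g)) m g (le_trans hn (by omega)) hg htop le_rfl

/-- Stage 3 auxiliary: move a top-to-top pair to the right edge by swaps,
then cap it off. -/
theorem move_cap (n : ℕ) (hn : 1 ≤ n) (D : ℕ) :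
    ∀ (w : ℕ) (g : Fin (w + 2) ⊕ Fin n → Fin (w + 2) ⊕ Fin n), w + 2 ≤ n →
    Function.Involutive g → (∀ x, g x ≠ x) →
    ∀ (i j : Fin (w + 2)), g (.inl i) = .inl j → i.val < j.val →
    (w - i.val) + (w + 1 - j.val) ≤ D →
    (∀ g'' : Fin w ⊕ Fin n → Fin w ⊕ Fin n, Function.Involutive g'' → (∀ x, g'' x ≠ x) →
      ∃ pl : Plan w n, Realizes pl (pairRel g'') ∧ planHt pl ≤ (n : ℤ) - 2) →
    ∃ pl : Plan (w + 2) n, Realizes pl (pairRel g) ∧ planHt pl ≤ (n : ℤ) - 2 := by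
  induction D with
  | zero =>
    intro w g hwn hg hfp i j hpair hij hD IH
    have hi : i.val = w := by have := j.isLt; omega
    have hj : j.val = w + 1 := by have := j.isLt; omega
    have hcap : g (.inl ⟨w, by omega⟩) = .inl ⟨w + 1, by omega⟩ := by
      rw [show (Sum.inl (⟨w, by omega⟩ : Fin (w + 2)) : Fin (w + 2) ⊕ Fin n) = .inl i from
        congrArg Sum.inl (Fin.ext hi.symm), hpair]
      exact congrArg Sum.inl (Fin.ext hj)
    obtain ⟨pl'', hpl'', hht''⟩ := IH (capG ⟨0, hn⟩ g) (cap_g_invol _ _ hg hcap)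
      (cap_g_fpf _ _ hg hfp hcap)
    refine ⟨Plan.cons (Row.cap w 0) pl'', cap_step _ _ hg hcap pl'' hpl'', ?_⟩
    show max (rowHt (Row.cap w 0)) (planHt pl'') ≤ _
    rw [show rowHt (Row.cap w 0) = -1 from rfl]
    exact max_le (by omega) hht''
  | succ D ih =>
    intro w g hwn hg hfp i j hpair hij hD IH
    by_cases hcapc : i.val = w ∧ j.val = w + 1
    · have hcap : g (.inl ⟨w, by omega⟩) = .inl ⟨w + 1, by omega⟩ := by
        rw [show (Sum.inl (⟨w, by omega⟩ : Fin (w + 2)) : Fin (w + 2) ⊕ Fin n) = .inl i from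
          congrArg Sum.inl (Fin.ext hcapc.1.symm), hpair]
        exact congrArg Sum.inl (Fin.ext hcapc.2)
      obtain ⟨pl'', hpl'', hht''⟩ := IH (capG ⟨0, hn⟩ g) (cap_g_invol _ _ hg hcap)
        (cap_g_fpf _ _ hg hfp hcap)
      refine ⟨Plan.cons (Row.cap w 0) pl'', cap_step _ _ hg hcap pl'' hpl'', ?_⟩
      show max (rowHt (Row.cap w 0)) (planHt pl'') ≤ _
      rw [show rowHt (Row.cap w 0) = -1 from rfl]
      exact max_le (by omega) hht''
    · -- swap step
      have hjlt := j.isLt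
      rcases lt_or_eq_of_le (show j.val + 1 ≤ w + 2 by omega) with hj2 | hj2
      · -- j.val < w + 1 : move j one step right
        have hw' : j.val + 1 < w + 2 := hj2
        set g' := swapG j.val hw' g with hg'def
        have hgi' : Function.Involutive g' := swapG_invol hw' hg
        have hfp' : ∀ x, g' x ≠ x := swapG_fpf hw' hg hfp
        have hσi : sigma j.val hw' i = i := sigma_other hw' (by omega) (by omega)
        have hσj : sigma j.val hw' j = ⟨j.val + 1, hw'⟩ := sigma_w hw' rfl
        have hpair' : g' (.inl i) = .inl ⟨j.val + 1, hw'⟩ := by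
          show tconj j.val hw' (g (tconj j.val hw' (.inl i))) = _
          show tconj j.val hw' (g (.inl (sigma j.val hw' i))) = _
          rw [hσi, hpair]
          show Sum.inl (sigma j.val hw' j) = _
          rw [hσj]
        obtain ⟨pl', hpl', hht'⟩ := ih w g' hwn hgi' hfp' i ⟨j.val + 1, hw'⟩ hpair'
          (by simp only; omega) (by simp only; omega) IH
        refine ⟨Plan.cons (swapRow j.val (w - j.val) (w + 2) (by omega)) pl',
          swap_step (by omega) hw' g hg pl' hpl', ?_⟩
        show max (rowHt (swapRow j.val (w - j.val) (w + 2) (by omega))) (planHt pl') ≤ _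
        rw [rowHt_swapRow]
        exact max_le (by omega) hht'
      · -- j.val = w + 1, i.val < w : move i one step right
        have hiw : i.val < w := by omega
        have hw' : i.val + 1 < w + 2 := by omega
        set g' := swapG i.val hw' g with hg'def
        have hgi' : Function.Involutive g' := swapG_invol hw' hg
        have hfp' : ∀ x, g' x ≠ x := swapG_fpf hw' hg hfp
        have hσi : sigma i.val hw' i = ⟨i.val + 1, hw'⟩ := sigma_w hw' rfl
        have hσj : sigma i.val hw' j = j := sigma_other hw' (by omega) (by omega)
        have hpair' : g' (.inl ⟨i.val + 1, hw'⟩) = .inl j := by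
          show tconj i.val hw' (g (tconj i.val hw' (.inl ⟨i.val + 1, hw'⟩))) = _
          show tconj i.val hw' (g (.inl (sigma i.val hw' ⟨i.val + 1, hw'⟩))) = _
          rw [sigma_w1 hw' rfl]
          rw [show (⟨i.val, by omega⟩ : Fin (w + 2)) = i from Fin.ext rfl, hpair]
          show Sum.inl (sigma i.val hw' j) = _
          rw [hσj]
        obtain ⟨pl', hpl', hht'⟩ := ih w g' hwn hgi' hfp' ⟨i.val + 1, hw'⟩ j hpair'
          (by simp only; omega) (by simp only; omega) IH
        refine ⟨Plan.cons (swapRow i.val (w - i.val) (w + 2) (by omega)) pl',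
          swap_step (by omega) hw' g hg pl' hpl', ?_⟩
        show max (rowHt (swapRow i.val (w - i.val) (w + 2) (by omega))) (planHt pl') ≤ _
        rw [rowHt_swapRow]
        exact max_le (by omega) hht'

/-- Stage 3: the main construction. -/
theorem main_plan (n : ℕ) (hn : 1 ≤ n) (M : ℕ) :
    ∀ (m : ℕ), m ≤ M → ∀ (g : Fin m ⊕ Fin n → Fin m ⊕ Fin n), m ≤ n →
    Function.Involutive g → (∀ x, g x ≠ x) →
    ∃ pl : Plan m n, Realizes pl (pairRel g) ∧ planHt pl ≤ (n : ℤ) - 2 := by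
  induction M with
  | zero =>
    intro m hm g hmn hg hfp
    have hm0 : m = 0 := by omega
    subst hm0
    exact cups_plan n hn (botbot g).card 0 g hmn hg hfp (fun i => i.elim0) le_rfl
  | succ M ih =>
    intro m hm g hmn hg hfp
    by_cases htop : ∀ i, ∃ k, g (.inl i) = .inr k
    · exact cups_plan n hn (botbot g).card m g hmn hg hfp htop le_rfl
    · push_neg at htop
      obtain ⟨i0, hi0⟩ := htop
      have hj0 : ∃ j, g (.inl i0) = .inl j := by
        cases hz : g (.inl i0) with
        | inl j => exact ⟨j, rfl⟩
        | inr k => exact absurd hz (hi0 k)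
      obtain ⟨j0, hj0⟩ := hj0
      have hne : i0 ≠ j0 := by
        intro h
        subst h
        exact hfp _ hj0
      have hm2 : 2 ≤ m := by
        have h1 := i0.isLt
        have h2 := j0.isLt
        have h3 : i0.val ≠ j0.val := fun h => hne (Fin.ext h)
        omega
      obtain ⟨w, rfl⟩ : ∃ w, m = w + 2 := ⟨m - 2, by omega⟩
      have IH : ∀ g'' : Fin w ⊕ Fin n → Fin w ⊕ Fin n, Function.Involutive g'' →
          (∀ x, g'' x ≠ x) →
          ∃ pl : Plan w n, Realizes pl (pairRel g'') ∧ planHt pl ≤ (n : ℤ) - 2 :=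
        fun g'' h1 h2 => ih w (by omega) g'' (by omega) h1 h2
      rcases lt_or_gt_of_ne (show i0.val ≠ j0.val from fun h => hne (Fin.ext h)) with hlt | hgt
      · exact move_cap n hn ((w - i0.val) + (w + 1 - j0.val)) w g hmn hg hfp i0 j0 hj0 hlt
          le_rfl IH
      · have hpair2 : g (.inl j0) = .inl i0 := by rw [← hj0, hg]
        exact move_cap n hn ((w - j0.val) + (w + 1 - i0.val)) w g hmn hg hfp j0 i0 hpair2 hgt
          le_rfl IH

end Stages


end PairProof


/-- every pair partition `p ∈ J(n,n)` (here: the partition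
induced by a fixed-point-free involution `f` of `{1,…,n} ∪ {1',…,n'}`)
has left-height at most `n - 2`; consequently for every `r ≥ n - 2`, having
left-height at most `r` is the same as having left-height at most `n - 2`,
i.e. `J_{≤r}(n,n) = J_{≤n-2}(n,n)`. -/
theorem height_le_of_pair_partition {n : ℕ} (hn : 1 ≤ n)
    (f : (Fin n ⊕ Fin n) → (Fin n ⊕ Fin n))
    (hinv : Function.Involutive f) (hfp : ∀ x, f x ≠ x) :
    ht (Relation.EqvGen fun x y => y = f x) ≤ (n : ℤ) - 2 ∧
    ∀ r : ℤ, (n : ℤ) - 2 ≤ r →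
      (ht (Relation.EqvGen fun x y => y = f x) ≤ r ↔
        ht (Relation.EqvGen fun x y => y = f x) ≤ (n : ℤ) - 2) := by
  obtain ⟨pl, hpl, hht⟩ := PairProof.main_plan n hn n n le_rfl f le_rfl hinv hfp
  have hreal : Realizes pl (Relation.EqvGen fun x y => y = f x) := fun x y =>
    (hpl x y).trans (PairProof.eqvGen_pairRel hinv x y).symm
  have hmem : planHt pl ∈ {h : ℤ | ∃ pl : Plan n n,
      Realizes pl (Relation.EqvGen fun x y => y = f x) ∧ planHt pl = h} := ⟨pl, hreal, rfl⟩
  have hbdd : BddBelow {h : ℤ | ∃ pl : Plan n n,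
      Realizes pl (Relation.EqvGen fun x y => y = f x) ∧ planHt pl = h} := by
    refine ⟨-1, ?_⟩
    rintro h ⟨pl', -, rfl⟩
    exact PairProof.neg_one_le_planHt pl'
  have hmain : ht (Relation.EqvGen fun x y => y = f x) ≤ (n : ℤ) - 2 :=
    le_trans (csInf_le hbdd hmem) hht
  exact ⟨hmain, fun r hr => ⟨fun _ => hmain, fun _ => le_trans hmain hr⟩⟩
end
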